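/- Suppose that n and m are natural numbers satisfying m ≥ n/2 + 30, and θ₁, …, θₙ are any n (not necessarily distinct) angles, each strictly between 0 and π. Then the tuple (θ₁, …, θₙ) can be realised with multiplicity by a set of m points in the plane. -/

import Mathlib

open EuclideanGeometry

/-- A set `P` of points realises the angle `θ` if some three points of `P`
form this angle. -/
def Realises {d : ℕ} (P : Set (EuclideanSpace ℝ (Fin d))) (θ : ℝ) : Prop :=
  ∃ A B C : EuclideanSpace ℝ (Fin d),
    A ∈ P ∧ B ∈ P ∧ C ∈ P ∧ A ≠ B ∧ C ≠ B ∧ EuclideanGeometry.angle A B C = θ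

/-- The ray from `B` towards `A`, encoded by its vertex together with the
unit vector in its direction. -/
noncomputable def rayOf {d : ℕ} (B A : EuclideanSpace ℝ (Fin d)) :
    EuclideanSpace ℝ (Fin d) × EuclideanSpace ℝ (Fin d) :=
  (B, ‖A - B‖⁻¹ • (A - B))

/-- A tuple `θ` of angles is realised with multiplicity by `P` if each `θ i` is
realised at some vertex `B i` by points `A i, C i` of `P`, with the unordered
pairs of rays pairwise distinct. -/
def RealisesMult {d n : ℕ} (P : Set (EuclideanSpace ℝ (Fin d))) (θ : Fin n → ℝ) : Prop :=
  ∃ A B C : Fin n → EuclideanSpace ℝ (Fin d),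
    (∀ i, A i ∈ P ∧ B i ∈ P ∧ C i ∈ P ∧ A i ≠ B i ∧ C i ≠ B i ∧
      EuclideanGeometry.angle (A i) (B i) (C i) = θ i) ∧
    Function.Injective fun i =>
      ({rayOf (B i) (A i), rayOf (B i) (C i)} :
        Set (EuclideanSpace ℝ (Fin d) × EuclideanSpace ℝ (Fin d)))

namespace St7
open Real Finset
noncomputable section

abbrev E2 := EuclideanSpace ℝ (Fin 2)
instance : DecidableEq E2 := Classical.decEq _
def pt (x y : ℝ) : E2 := WithLp.toLp 2 ![x, y]

lemma pt_sub (x y a b : ℝ) : pt x y - pt a b = pt (x-a) (y-b) := by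
  ext i; fin_cases i <;> simp [pt]
lemma pt_norm (x y : ℝ) : ‖pt x y‖ = Real.sqrt (x^2 + y^2) := by
  rw [EuclideanSpace.norm_eq]; simp [pt, Fin.sum_univ_two]
lemma pt_inner (x y a b : ℝ) : (inner ℝ (pt x y) (pt a b) : ℝ) = x*a + y*b := by
  simp [pt, PiLp.inner_apply, Fin.sum_univ_two]; ring
lemma pt_smul (k x y : ℝ) : k • pt x y = pt (k*x) (k*y) := by
  ext i; fin_cases i <;> simp [pt]
lemma pt_eq {x y a b : ℝ} (h1 : x = a) (h2 : y = b) : pt x y = pt a b := by rw [h1, h2]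

lemma pt_inj {x y a b : ℝ} (h : pt x y = pt a b) : x = a ∧ y = b := by
  constructor
  · have := congrArg (fun v : E2 => v 0) h; simpa [pt] using this
  · have := congrArg (fun v : E2 => v 1) h; simpa [pt] using this

lemma angle_master {φ a k ε σ : ℝ} (hφ : φ ∈ Set.Icc 0 π) (ha : 0 < a) (hk : 0 < k)
    (hε : ε = 1 ∨ ε = -1) (hσ : σ = 1 ∨ σ = -1) :
    InnerProductGeometry.angle (pt (ε*a) 0) (pt (ε*(k*Real.cos φ)) (σ*(k*Real.sin φ))) = φ := by
  have hε2 : ε^2 = 1 := by rcases hε with h|h <;> simp [h]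
  have hσ2 : σ^2 = 1 := by rcases hσ with h|h <;> simp [h]
  rw [InnerProductGeometry.angle, pt_inner, pt_norm, pt_norm]
  have h1 : ε*a*(ε*(k*Real.cos φ)) + 0*(σ*(k*Real.sin φ)) = ε^2*(a*(k*Real.cos φ)) := by ring
  have h2 : (ε*a)^2 + 0^2 = ε^2*a^2 := by ring
  have h3 : (ε*(k*Real.cos φ))^2 + (σ*(k*Real.sin φ))^2 = k^2*((Real.sin φ)^2 + (Real.cos φ)^2) := by
    rw [show (ε*(k*Real.cos φ))^2 + (σ*(k*Real.sin φ))^2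
        = ε^2*(k*Real.cos φ)^2 + σ^2*(k*Real.sin φ)^2 by ring, hε2, hσ2]; ring
  rw [h1, h2, h3, hε2, Real.sin_sq_add_cos_sq]
  rw [one_mul, one_mul, mul_one, Real.sqrt_sq ha.le, Real.sqrt_sq hk.le]
  have : a*(k*Real.cos φ) / (a*k) = Real.cos φ := by field_simp
  rw [this]
  exact Real.arccos_cos hφ.1 hφ.2

/-- The Euclidean angle at `B` between points `A, C`, given displacement data. -/
lemma angle_of_data {A B C : E2} {φ a k ε σ : ℝ} (hφ : φ ∈ Set.Icc 0 π) (ha : 0 < a)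
    (hk : 0 < k) (hε : ε = 1 ∨ ε = -1) (hσ : σ = 1 ∨ σ = -1)
    (hA : A - B = pt (ε*a) 0)
    (hC : C - B = pt (ε*(k*Real.cos φ)) (σ*(k*Real.sin φ))) :
    EuclideanGeometry.angle A B C = φ := by
  rw [EuclideanGeometry.angle, vsub_eq_sub, vsub_eq_sub, hA, hC]
  exact angle_master hφ ha hk hε hσ

lemma ray_master {B A : E2} {k x y : ℝ} (hk : 0 < k) (hxy : x^2 + y^2 = 1)
    (hA : A - B = pt (k*x) (k*y)) :
    rayOf B A = (B, pt x y) := by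
  have hn : ‖A - B‖ = k := by
    rw [hA, pt_norm, show (k*x)^2 + (k*y)^2 = k^2*(x^2+y^2) by ring, hxy, mul_one,
      Real.sqrt_sq hk.le]
  rw [rayOf, hn, hA, pt_smul]
  have hx : k⁻¹ * (k*x) = x := by field_simp
  have hy : k⁻¹ * (k*y) = y := by field_simp
  rw [hx, hy]

lemma cot_ne_zero {v : ℝ} (h : v ∈ Set.Ioo 0 π) (hv : v ≠ π/2) : Real.cot v ≠ 0 := by
  rw [Real.cot_eq_cos_div_sin]
  have hs : Real.sin v ≠ 0 := ne_of_gt (Real.sin_pos_of_pos_of_lt_pi h.1 h.2)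
  have hc : Real.cos v ≠ 0 := by
    intro hc
    obtain ⟨k, hk⟩ := Real.cos_eq_zero_iff.mp hc
    apply hv
    have hpi := Real.pi_pos
    rcases lt_trichotomy k 0 with hk0 | hk0 | hk0
    · have hk1 : k ≤ -1 := by omega
      have hk2 : (k:ℝ) ≤ -1 := by exact_mod_cast hk1
      nlinarith [h.1]
    · subst hk0; rw [hk]; push_cast; ring
    · have hk2 : (1:ℝ) ≤ k := by exact_mod_cast hk0
      nlinarith [h.2]
  exact div_ne_zero hc hs

lemma cos_inj_Ioo {v w : ℝ} (hv : v ∈ Set.Ioo 0 π) (hw : w ∈ Set.Ioo 0 π)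
    (h : Real.cos v = Real.cos w) : v = w :=
  Real.injOn_cos ⟨hv.1.le, hv.2.le⟩ ⟨hw.1.le, hw.2.le⟩ h

section Machinery
variable {n : ℕ} (θ : Fin n → ℝ)

def occ (v : ℝ) : ℕ := (Finset.univ.filter (fun j => θ j = v)).card
def rnk (i : Fin n) : ℕ := (Finset.univ.filter (fun j => θ j = θ i ∧ j < i)).card

lemma rnk_lt_occ (i : Fin n) : rnk θ i < occ θ (θ i) := by
  apply Finset.card_lt_card
  constructor
  · intro j hj
    simp only [Finset.mem_filter] at *
    exact ⟨hj.1, hj.2.1⟩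
  · intro hsub
    have : i ∈ Finset.univ.filter (fun j => θ j = θ i) := by simp
    have h2 := hsub this
    simp only [Finset.mem_filter] at h2
    exact absurd h2.2.2 (lt_irrefl i)

lemma rnk_strict {i j : Fin n} (hij : i < j) (hv : θ i = θ j) : rnk θ i < rnk θ j := by
  apply Finset.card_lt_card
  constructor
  · intro x hx
    simp only [Finset.mem_filter] at hx ⊢
    exact ⟨hx.1, hx.2.1.trans hv, hx.2.2.trans hij⟩
  · intro hsub
    have : i ∈ Finset.univ.filter (fun x => θ x = θ j ∧ x < j) := by
      simp [hv, hij]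
    have h2 := hsub this
    simp only [Finset.mem_filter] at h2
    exact absurd h2.2.2 (lt_irrefl i)

lemma rnk_inj {i j : Fin n} (hv : θ i = θ j) (hr : rnk θ i = rnk θ j) : i = j := by
  rcases lt_trichotomy i j with h|h|h
  · exact absurd hr (rnk_strict θ h hv).ne
  · exact h
  · exact absurd hr.symm (rnk_strict θ h hv.symm).ne

lemma rnk_surj (v : ℝ) (k : ℕ) (hk : k < occ θ v) : ∃ i, θ i = v ∧ rnk θ i = k := by
  classical
  set F := Finset.univ.filter (fun j => θ j = v) with hF
  have himg : F.image (rnk θ) = Finset.range (occ θ v) := by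
    apply Finset.eq_of_subset_of_card_le
    · intro x hx
      simp only [Finset.mem_image] at hx
      obtain ⟨i, hi, hrx⟩ := hx
      simp only [hF, Finset.mem_filter] at hi
      rw [Finset.mem_range, ← hrx, ← hi.2]
      exact rnk_lt_occ θ i
    · rw [Finset.card_range, Finset.card_image_of_injOn]
      · rfl
      · intro a ha b hb hab
        simp only [hF, Finset.coe_filter, Set.mem_setOf_eq] at ha hb
        exact rnk_inj θ (ha.2.trans hb.2.symm) hab
  have : k ∈ F.image (rnk θ) := by rw [himg]; exact Finset.mem_range.mpr hk
  simp only [Finset.mem_image, hF, Finset.mem_filter] at this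
  obtain ⟨i, hi, hr⟩ := this
  exact ⟨i, hi.2, hr⟩

def IsSingle (i : Fin n) : Prop := rnk θ i + 1 = occ θ (θ i) ∧ Odd (occ θ (θ i))

instance : DecidablePred (IsSingle θ) := fun i => by unfold IsSingle; infer_instance

def NS : Finset (Fin n) := Finset.univ.filter (fun i => ¬ IsSingle θ i)
def key (i : Fin n) : ℝ × ℕ := (θ i, rnk θ i / 2)
def AU : Finset (ℝ × ℕ) := (NS θ).image (key θ)

lemma pair_ranks {i : Fin n} (hi : i ∈ NS θ) :
    2 * (rnk θ i / 2) + 1 < occ θ (θ i) := by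
  have hlt := rnk_lt_occ θ i
  have hns : ¬ (rnk θ i + 1 = occ θ (θ i) ∧ Odd (occ θ (θ i))) := by
    simpa [NS, IsSingle] using hi
  rcases Nat.even_or_odd (rnk θ i) with he | ho
  · have h2 : 2 * (rnk θ i / 2) = rnk θ i := Nat.two_mul_div_two_of_even he
    rw [h2]
    rcases Nat.lt_or_ge (rnk θ i + 1) (occ θ (θ i)) with h | h
    · exact h
    · have heq : rnk θ i + 1 = occ θ (θ i) := le_antisymm hlt h
      exfalso; apply hns
      refine ⟨heq, ?_⟩
      rw [← heq]
      exact Even.add_one he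
  · have h2 : 2 * (rnk θ i / 2) + 1 = rnk θ i := by
      obtain ⟨c, hc⟩ := ho; omega
    rw [h2]; exact hlt

lemma mem_AU_iff {u : ℝ × ℕ} (hu : u ∈ AU θ) :
    2 * u.2 + 1 < occ θ u.1 := by
  simp only [AU, Finset.mem_image] at hu
  obtain ⟨i, hi, hk⟩ := hu
  have := pair_ranks θ hi
  rw [← hk]; simpa [key] using this

lemma ns_of_rank {v : ℝ} {k : ℕ} (h : 2*k+1 < occ θ v) :
    ∃ a b : Fin n, a ∈ NS θ ∧ b ∈ NS θ ∧ a ≠ b ∧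
      θ a = v ∧ θ b = v ∧ rnk θ a = 2*k ∧ rnk θ b = 2*k+1 := by
  obtain ⟨a, hav, har⟩ := rnk_surj θ v (2*k) (by omega)
  obtain ⟨b, hbv, hbr⟩ := rnk_surj θ v (2*k+1) h
  refine ⟨a, b, ?_, ?_, ?_, hav, hbv, har, hbr⟩
  · simp only [NS, Finset.mem_filter, Finset.mem_univ, true_and]
    rintro ⟨h1, h2⟩
    rw [har, hav] at h1
    omega
  · simp only [NS, Finset.mem_filter, Finset.mem_univ, true_and]
    rintro ⟨h1, h2⟩
    rw [hbr, hbv] at h1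
    rw [hbv] at h2
    rw [← h1] at h2
    obtain ⟨c, hc⟩ := h2
    omega
  · intro hab; rw [hab] at har; omega

lemma fiber_two {u : ℝ × ℕ} (hu : u ∈ AU θ) :
    ((NS θ).filter (fun i => key θ i = u)).card = 2 := by
  obtain ⟨a, b, ha, hb, hab, hav, hbv, har, hbr⟩ := ns_of_rank θ (mem_AU_iff θ hu)
  rw [Finset.card_eq_two]
  refine ⟨a, b, hab, ?_⟩
  ext x
  simp only [Finset.mem_filter, Finset.mem_insert, Finset.mem_singleton]
  constructor
  · rintro ⟨hx, hkx⟩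
    have hxv : θ x = u.1 := congrArg Prod.fst hkx
    have hxk : rnk θ x / 2 = u.2 := congrArg Prod.snd hkx
    have : rnk θ x = 2*u.2 ∨ rnk θ x = 2*u.2+1 := by omega
    rcases this with h|h
    · left; exact rnk_inj θ (hxv.trans hav.symm) (by omega)
    · right; exact rnk_inj θ (hxv.trans hbv.symm) (by omega)
  · rintro (rfl|rfl)
    · refine ⟨ha, Prod.ext_iff.mpr ⟨hav, ?_⟩⟩
      show rnk θ x / 2 = u.2; omega
    · refine ⟨hb, Prod.ext_iff.mpr ⟨hbv, ?_⟩⟩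
      show rnk θ x / 2 = u.2; omega

lemma NS_card : (NS θ).card = 2 * (AU θ).card := by
  rw [Finset.card_eq_sum_card_fiberwise (f := key θ) (t := AU θ)
    (fun x hx => Finset.mem_image_of_mem _ hx)]
  rw [Finset.sum_congr rfl (fun u hu => fiber_two θ hu), Finset.sum_const, smul_eq_mul,
    mul_comm]

lemma k_bound {i : Fin n} (hi : i ∈ NS θ) :
    rnk θ i / 2 < ((AU θ).filter (fun u => u.1 = θ i)).card := by
  set k := rnk θ i / 2 with hk
  have hsub : (Finset.range (k+1)).image (fun k' => ((θ i, k') : ℝ × ℕ))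
      ⊆ (AU θ).filter (fun u => u.1 = θ i) := by
    intro u hu
    simp only [Finset.mem_image, Finset.mem_range] at hu
    obtain ⟨k', hk', rfl⟩ := hu
    have hkk : 2*k'+1 < occ θ (θ i) := by
      have := pair_ranks θ hi
      omega
    obtain ⟨a, b, ha, hb, _, hav, _, har, _⟩ := ns_of_rank θ hkk
    simp only [Finset.mem_filter, AU, Finset.mem_image]
    refine ⟨⟨a, ha, Prod.ext_iff.mpr ⟨hav, ?_⟩⟩, trivial⟩
    show rnk θ a / 2 = k'; omega
  have hcard := Finset.card_le_card hsub
  rw [Finset.card_image_of_injective _ (fun x y hxy => (Prod.ext_iff.mp hxy).2),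
    Finset.card_range] at hcard
  omega


-- ===================== construction =====================

def ZU : Finset (ℝ ×ₗ ℕ) := ((AU θ).filter (fun u => u.1 ≠ π/2)).image toLex
def U1 : ℕ := (ZU θ).card
def GG : ℕ := ((AU θ).filter (fun u => u.1 = π/2)).card
def NB : ℕ := (GG θ + 1) / 2
def KK : ℕ := U1 θ + 2 * NB θ

def wIso : Fin (U1 θ) ≃o {x // x ∈ ZU θ} := (ZU θ).orderIsoOfFin rfl
def val (g : ℕ) : ℝ := if h : g < U1 θ then (ofLex ((wIso θ ⟨g, h⟩ : {x // x ∈ ZU θ}) : ℝ ×ₗ ℕ)).1 else 0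
def off (j : ℕ) : ℝ := if j < U1 θ then Real.cot (val θ j) else if (j - U1 θ) % 2 = 0 then 0 else 1
def X (j : ℕ) : ℝ := ∑ g ∈ Finset.range j, off θ g
def zz (j : ℕ) : E2 := pt (X θ j) ((j % 2 : ℕ) : ℝ)
def Bbig : ℝ := (∑ g ∈ Finset.range (KK θ), |off θ g|) + 1
def far (ε : ℝ) (l : ℕ) : E2 := pt (ε * Bbig θ) ((l % 2 : ℕ) : ℝ)

def SS : Finset (Fin n) := Finset.univ.filter (IsSingle θ)
def Svals : Finset ℝ := (SS θ).image θ
def rr : ℕ := (Svals θ).card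
def esIso : Fin (rr θ) ≃o {x // x ∈ Svals θ} := (Svals θ).orderIsoOfFin rfl
def sval (t : ℕ) : ℝ := if h : t < rr θ then ((esIso θ ⟨t, h⟩ : {x // x ∈ Svals θ}) : ℝ) else 0
def rho (l : ℕ) : ℝ := Real.sin (sval θ (2*l+1)) / Real.sin (sval θ (2*l+1) - sval θ (2*l))
def Rpt (l : ℕ) : E2 :=
  pt (rho θ l * Real.cos (sval θ (2*l))) (30 + rho θ l * Real.sin (sval θ (2*l)))
def RoddPt : E2 := pt (2 + Real.cos (sval θ (rr θ - 1))) (30 + Real.sin (sval θ (rr θ - 1)))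
def basePt (b : ℕ) : E2 := pt b 30

def eIdx (i : Fin n) : ℕ :=
  if h : toLex (key θ i) ∈ ZU θ then ((wIso θ).symm ⟨toLex (key θ i), h⟩ : Fin (U1 θ)) else 0
def tIdx (i : Fin n) : ℕ :=
  if h : θ i ∈ Svals θ then ((esIso θ).symm ⟨θ i, h⟩ : Fin (rr θ)) else 0
def jV (i : Fin n) : ℕ := U1 θ + 2*((rnk θ i / 2)/2) + ((rnk θ i / 2) % 2)
def jT (i : Fin n) : ℕ := U1 θ + 2*((rnk θ i / 2)/2) + (1 - (rnk θ i / 2) % 2)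

def dataB (i : Fin n) : E2 :=
  if IsSingle θ i then
    (if tIdx θ i % 2 = 1 then basePt 1 else if tIdx θ i + 1 < rr θ then basePt 0 else basePt 2)
  else if θ i = π/2 then zz θ (jV θ i)
  else if rnk θ i % 2 = 0 then zz θ (eIdx θ i) else zz θ (eIdx θ i + 1)

def dataA (i : Fin n) : E2 :=
  if IsSingle θ i then
    (if tIdx θ i % 2 = 1 then basePt 2 else if tIdx θ i + 1 < rr θ then basePt 1 else basePt 3)
  else if θ i = π/2 then far θ (if rnk θ i % 2 = 0 then 1 else -1) (jV θ i)
  else if rnk θ i % 2 = 0 then far θ 1 (eIdx θ i) else far θ (-1) (eIdx θ i + 1)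

def dataC (i : Fin n) : E2 :=
  if IsSingle θ i then
    (if tIdx θ i % 2 = 1 then Rpt θ (tIdx θ i / 2)
     else if tIdx θ i + 1 < rr θ then Rpt θ (tIdx θ i / 2) else RoddPt θ)
  else if θ i = π/2 then zz θ (jT θ i)
  else if rnk θ i % 2 = 0 then zz θ (eIdx θ i + 1) else zz θ (eIdx θ i)

def P0 : Finset E2 :=
  ((Finset.range (KK θ + 1)).image (zz θ)) ∪
  {far θ 1 0, far θ 1 1, far θ (-1) 0, far θ (-1) 1} ∪
  ((Finset.range 4).image (basePt)) ∪
  ((Finset.range (rr θ / 2 + 1)).image (Rpt θ)) ∪ {RoddPt θ}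

-- ===================== structural lemmas =====================

lemma mem_AU_val (hθ : ∀ i, θ i ∈ Set.Ioo 0 π) {u : ℝ × ℕ} (hu : u ∈ AU θ) : u.1 ∈ Set.Ioo 0 π := by
  simp only [AU, Finset.mem_image] at hu
  obtain ⟨i, _, rfl⟩ := hu
  exact hθ i

lemma val_mem (hθ : ∀ i, θ i ∈ Set.Ioo 0 π) {g : ℕ} (hg : g < U1 θ) :
    val θ g ∈ Set.Ioo 0 π ∧ val θ g ≠ π/2 := by
  rw [val, dif_pos hg]
  have hmem := ((wIso θ) ⟨g, hg⟩).2
  simp only [ZU, Finset.mem_image] at hmem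
  obtain ⟨u, hu, hlex⟩ := hmem
  rw [Finset.mem_filter] at hu
  have : (ofLex ((wIso θ ⟨g, hg⟩ : {x // x ∈ ZU θ}) : ℝ ×ₗ ℕ)) = u := by
    have h := congrArg ofLex hlex.symm; simp only [ofLex_toLex] at h; exact h
  rw [this]
  exact ⟨mem_AU_val θ hθ hu.1, hu.2⟩

lemma val_sorted {g g' : ℕ} (hgg : g ≤ g') (hg' : g' < U1 θ) :
    val θ g ≤ val θ g' := by
  have hg : g < U1 θ := lt_of_le_of_lt hgg hg'
  rw [val, dif_pos hg, val, dif_pos hg']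
  have hmono : (wIso θ ⟨g, hg⟩ : {x // x ∈ ZU θ}) ≤ wIso θ ⟨g', hg'⟩ :=
    (wIso θ).monotone (by exact hgg)
  have hlex : ((wIso θ ⟨g, hg⟩ : {x // x ∈ ZU θ}) : ℝ ×ₗ ℕ)
      ≤ ((wIso θ ⟨g', hg'⟩ : {x // x ∈ ZU θ}) : ℝ ×ₗ ℕ) := hmono
  rcases Prod.Lex.le_iff.mp hlex with h1 | ⟨h1, _⟩
  · exact le_of_lt h1
  · exact le_of_eq h1

lemma memZU_of (i : Fin n) (hi : i ∈ NS θ) (hpi : θ i ≠ π/2) :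
    toLex (key θ i) ∈ ZU θ := by
  simp only [ZU, Finset.mem_image]
  refine ⟨key θ i, ?_, rfl⟩
  rw [Finset.mem_filter]
  exact ⟨Finset.mem_image_of_mem _ hi, hpi⟩

lemma eIdx_lt (i : Fin n) (hi : i ∈ NS θ) (hpi : θ i ≠ π/2) : eIdx θ i < U1 θ := by
  rw [eIdx, dif_pos (memZU_of θ i hi hpi)]
  exact ((wIso θ).symm ⟨toLex (key θ i), memZU_of θ i hi hpi⟩).2

lemma val_eIdx (i : Fin n) (hi : i ∈ NS θ) (hpi : θ i ≠ π/2) :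
    val θ (eIdx θ i) = θ i := by
  have hmem := memZU_of θ i hi hpi
  rw [eIdx, dif_pos hmem]
  have hlt : (((wIso θ).symm ⟨toLex (key θ i), hmem⟩ : Fin (U1 θ)) : ℕ) < U1 θ :=
    ((wIso θ).symm ⟨toLex (key θ i), hmem⟩).2
  rw [val, dif_pos hlt]
  have heq : (⟨(((wIso θ).symm ⟨toLex (key θ i), hmem⟩ : Fin (U1 θ)) : ℕ), hlt⟩ : Fin (U1 θ))
      = (wIso θ).symm ⟨toLex (key θ i), hmem⟩ := by
    apply Fin.ext; rfl
  rw [heq, OrderIso.apply_symm_apply]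
  rfl

lemma X_succ (j : ℕ) : X θ (j+1) = X θ j + off θ j := Finset.sum_range_succ _ _

lemma X_run {e e' : ℕ} (hee : e ≤ e') (he' : e' < U1 θ) (hv : val θ e = val θ e') :
    X θ e' = X θ e + ((e' - e : ℕ) : ℝ) * Real.cot (val θ e) := by
  have hsum : X θ e' - X θ e = ∑ g ∈ Finset.Ico e e', off θ g := by
    rw [X, X, ← Finset.sum_Ico_eq_sub _ hee]
  have hconst : ∀ g ∈ Finset.Ico e e', off θ g = Real.cot (val θ e) := by
    intro g hg
    rw [Finset.mem_Ico] at hg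
    have hgU : g < U1 θ := lt_trans hg.2 he'
    have h1 : val θ e ≤ val θ g := val_sorted θ hg.1 hgU
    have h2 : val θ g ≤ val θ e' := val_sorted θ (le_of_lt hg.2) he'
    have : val θ g = val θ e := le_antisymm (hv ▸ h2) h1
    rw [off, if_pos hgU, this]
  rw [Finset.sum_congr rfl hconst, Finset.sum_const, Nat.card_Ico, nsmul_eq_mul] at hsum
  linarith

lemma X_block (jj : ℕ) :
    X θ (U1 θ + jj) = X θ (U1 θ) + ((jj/2 : ℕ) : ℝ) := by
  induction jj with
  | zero => simp
  | succ j ih =>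
    rw [← Nat.add_assoc, X_succ, ih]
    have hoff : off θ (U1 θ + j) = if j % 2 = 0 then 0 else 1 := by
      rw [off, if_neg (by omega), Nat.add_sub_cancel_left]
    rcases Nat.even_or_odd j with he | ho
    · have h0 : j % 2 = 0 := Nat.even_iff.mp he
      rw [hoff, if_pos h0]
      have : (j+1)/2 = j/2 := by omega
      rw [this]; ring
    · have h1 : j % 2 = 1 := Nat.odd_iff.mp ho
      rw [hoff, if_neg (by omega)]
      have : (j+1)/2 = j/2 + 1 := by omega
      rw [this]; push_cast; ring

lemma X_bound {j : ℕ} (hj : j ≤ KK θ) : |X θ j| ≤ Bbig θ - 1 := by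
  rw [X, Bbig]
  have h1 : |∑ g ∈ Finset.range j, off θ g| ≤ ∑ g ∈ Finset.range j, |off θ g| :=
    Finset.abs_sum_le_sum_abs _ _
  have h2 : ∑ g ∈ Finset.range j, |off θ g| ≤ ∑ g ∈ Finset.range (KK θ), |off θ g| := by
    apply Finset.sum_le_sum_of_subset_of_nonneg
    · exact Finset.range_subset_range.mpr hj
    · intro g _ _; exact abs_nonneg _
  linarith

-- ===================== edge/vertical/far computations =====================

def sg (e : ℕ) : ℝ := if e % 2 = 0 then 1 else -1

lemma sg_cases (e : ℕ) : sg e = 1 ∨ sg e = -1 := by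
  rw [sg]; split <;> simp

lemma zz_y (j : ℕ) : ((j % 2 : ℕ) : ℝ) = if j % 2 = 0 then (0:ℝ) else 1 := by
  rcases Nat.even_or_odd j with h | h
  · rw [Nat.even_iff.mp h]; simp
  · rw [Nat.odd_iff.mp h]; simp

lemma succ_y_sub (e : ℕ) : (((e+1) % 2 : ℕ) : ℝ) - ((e % 2 : ℕ) : ℝ) = sg e := by
  rcases Nat.even_or_odd e with h | h
  · have h0 : e % 2 = 0 := Nat.even_iff.mp h
    have h1 : (e+1) % 2 = 1 := by omega
    rw [h0, h1, sg, if_pos h0]; norm_num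
  · have h0 : e % 2 = 1 := Nat.odd_iff.mp h
    have h1 : (e+1) % 2 = 0 := by omega
    rw [h0, h1, sg, if_neg (by omega)]; norm_num

lemma zz_sub_edge {e : ℕ} (he : e < U1 θ) :
    zz θ (e+1) - zz θ e = pt (Real.cot (val θ e)) (sg e) := by
  rw [zz, zz, pt_sub, X_succ, off, if_pos he, succ_y_sub]
  ring_nf

-- singles machinery
lemma sval_mem (hθ : ∀ i, θ i ∈ Set.Ioo 0 π) {t : ℕ} (ht : t < rr θ) :
    sval θ t ∈ Set.Ioo 0 π := by
  rw [sval, dif_pos ht]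
  have hmem := ((esIso θ) ⟨t, ht⟩).2
  simp only [Svals, Finset.mem_image] at hmem
  obtain ⟨i, _, hv⟩ := hmem
  exact hv ▸ hθ i

lemma sval_strict {t t' : ℕ} (h : t < t') (ht' : t' < rr θ) :
    sval θ t < sval θ t' := by
  have ht : t < rr θ := lt_trans h ht'
  rw [sval, dif_pos ht, sval, dif_pos ht']
  have := (esIso θ).strictMono (show (⟨t, ht⟩ : Fin (rr θ)) < ⟨t', ht'⟩ from h)
  exact this

lemma single_mem_Svals {i : Fin n} (hi : IsSingle θ i) : θ i ∈ Svals θ := by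
  simp only [Svals, Finset.mem_image]
  exact ⟨i, by simp [SS, hi], rfl⟩

lemma tIdx_lt {i : Fin n} (hi : IsSingle θ i) : tIdx θ i < rr θ := by
  rw [tIdx, dif_pos (single_mem_Svals θ hi)]
  exact ((esIso θ).symm ⟨θ i, single_mem_Svals θ hi⟩).2

lemma sval_tIdx {i : Fin n} (hi : IsSingle θ i) : sval θ (tIdx θ i) = θ i := by
  have hmem := single_mem_Svals θ hi
  rw [tIdx, dif_pos hmem]
  have hlt : (((esIso θ).symm ⟨θ i, hmem⟩ : Fin (rr θ)) : ℕ) < rr θ :=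
    ((esIso θ).symm ⟨θ i, hmem⟩).2
  rw [sval, dif_pos hlt]
  have heq : (⟨(((esIso θ).symm ⟨θ i, hmem⟩ : Fin (rr θ)) : ℕ), hlt⟩ : Fin (rr θ))
      = (esIso θ).symm ⟨θ i, hmem⟩ := by apply Fin.ext; rfl
  rw [heq, OrderIso.apply_symm_apply]

lemma single_inj {i j : Fin n} (hi : IsSingle θ i) (hj : IsSingle θ j)
    (hv : θ i = θ j) : i = j := by
  apply rnk_inj θ hv
  have h1 := hi.1
  have h2 := hj.1
  rw [hv] at h1
  omega

lemma tIdx_inj {i j : Fin n} (hi : IsSingle θ i) (hj : IsSingle θ j)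
    (ht : tIdx θ i = tIdx θ j) : i = j := by
  apply single_inj θ hi hj
  rw [← sval_tIdx θ hi, ← sval_tIdx θ hj, ht]

lemma basePt_sub (b b' : ℕ) : basePt b - basePt b' = pt ((b:ℝ) - b') 0 := by
  rw [basePt, basePt, pt_sub]; norm_num

lemma sval_lt_pair (hθ : ∀ i, θ i ∈ Set.Ioo 0 π) {l : ℕ} (hl : 2*l+1 < rr θ) :
    0 < sval θ (2*l) ∧ sval θ (2*l) < sval θ (2*l+1) ∧ sval θ (2*l+1) < π := by
  have h1 := sval_mem θ hθ (show 2*l < rr θ by omega)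
  have h2 := sval_mem θ hθ hl
  exact ⟨h1.1, sval_strict θ (by omega) hl, h2.2⟩

lemma rho_pos (hθ : ∀ i, θ i ∈ Set.Ioo 0 π) {l : ℕ} (hl : 2*l+1 < rr θ) :
    0 < rho θ l := by
  obtain ⟨h1, h2, h3⟩ := sval_lt_pair θ hθ hl
  apply div_pos
  · exact Real.sin_pos_of_pos_of_lt_pi (by linarith) h3
  · exact Real.sin_pos_of_pos_of_lt_pi (by linarith) (by linarith)

lemma Rpt_sub0 (l : ℕ) :
    Rpt θ l - basePt 0 = pt (rho θ l * Real.cos (sval θ (2*l))) (rho θ l * Real.sin (sval θ (2*l))) := by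
  rw [Rpt, basePt, pt_sub]
  norm_num

lemma Rpt_sub1 (hθ : ∀ i, θ i ∈ Set.Ioo 0 π) {l : ℕ} (hl : 2*l+1 < rr θ) :
    Rpt θ l - basePt 1 =
      pt ((Real.sin (sval θ (2*l)) / Real.sin (sval θ (2*l+1) - sval θ (2*l))) * Real.cos (sval θ (2*l+1)))
         ((Real.sin (sval θ (2*l)) / Real.sin (sval θ (2*l+1) - sval θ (2*l))) * Real.sin (sval θ (2*l+1))) := by
  obtain ⟨h1, h2, h3⟩ := sval_lt_pair θ hθ hl
  set a := sval θ (2*l)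
  set b := sval θ (2*l+1)
  have hsab : Real.sin (b - a) ≠ 0 :=
    ne_of_gt (Real.sin_pos_of_pos_of_lt_pi (by linarith) (by linarith))
  rw [Rpt, basePt, pt_sub, rho]
  refine pt_eq ?_ ?_
  · have hs : Real.sin (sval θ (2*l+1) - sval θ (2*l)) ≠ 0 := hsab
    field_simp
    simp only [Real.sin_sub]
    ring
  · have hs : Real.sin (sval θ (2*l+1) - sval θ (2*l)) ≠ 0 := hsab
    field_simp
    ring

lemma RoddPt_sub : RoddPt θ - basePt 2 = pt (Real.cos (sval θ (rr θ - 1))) (Real.sin (sval θ (rr θ - 1))) := by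
  rw [RoddPt, basePt, pt_sub]
  norm_num

-- ===================== helpers for roles =====================

lemma pt_neg (x y : ℝ) : -pt x y = pt (-x) (-y) := by
  ext i; fin_cases i <;> simp [pt]

lemma sub_swap {A B : E2} {x y : ℝ} (h : A - B = pt x y) : B - A = pt (-x) (-y) := by
  rw [← neg_sub, h, pt_neg]

lemma ne_of_sub {A B : E2} {x y : ℝ} (h : A - B = pt x y) (hxy : x ≠ 0 ∨ y ≠ 0) : A ≠ B := by
  intro hAB
  rw [hAB, sub_self] at h
  have h0 : pt 0 0 = (0 : E2) := by ext i; fin_cases i <;> simp [pt]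
  rw [← h0] at h
  rcases hxy with hx | hy
  · exact hx (pt_inj h).1.symm
  · exact hy (pt_inj h).2.symm

lemma unit_dir {v s : ℝ} (hs : s = 1 ∨ s = -1) :
    (Real.cos v)^2 + (s * Real.sin v)^2 = 1 := by
  have : s^2 = 1 := by rcases hs with h|h <;> simp [h]
  rw [show (s*Real.sin v)^2 = s^2 * (Real.sin v)^2 by ring, this]
  rw [one_mul, ← Real.sin_sq_add_cos_sq v]; ring

lemma far_sub {ε : ℝ} (hε : ε = 1 ∨ ε = -1) (j : ℕ) :
    far θ ε j - zz θ j = pt (ε * (Bbig θ - ε * X θ j)) 0 := by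
  rw [far, zz, pt_sub, sub_self]
  refine pt_eq ?_ rfl
  rcases hε with h|h <;> subst h <;> ring

lemma far_apos {ε : ℝ} (hε : ε = 1 ∨ ε = -1) {j : ℕ} (hj : j ≤ KK θ) :
    0 < Bbig θ - ε * X θ j := by
  have hb := X_bound θ hj
  have := abs_le.mp hb
  rcases hε with h|h <;> subst h <;> simp <;> nlinarith

lemma sin_pos_of_Ioo {v : ℝ} (hv : v ∈ Set.Ioo 0 π) : 0 < Real.sin v :=
  Real.sin_pos_of_pos_of_lt_pi hv.1 hv.2

lemma edge_form_angle {v s : ℝ} (hv : v ∈ Set.Ioo 0 π) :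
    pt (Real.cot v) s = pt (1*((1/Real.sin v)*Real.cos v)) (s*((1/Real.sin v)*Real.sin v)) := by
  have hs := (sin_pos_of_Ioo hv).ne'
  refine pt_eq ?_ ?_
  · rw [Real.cot_eq_cos_div_sin]; field_simp
  · field_simp

lemma edge_form_ray {v s : ℝ} (hv : v ∈ Set.Ioo 0 π) :
    pt (Real.cot v) s = pt ((1/Real.sin v)*Real.cos v) ((1/Real.sin v)*(s*Real.sin v)) := by
  have hs := (sin_pos_of_Ioo hv).ne'
  refine pt_eq ?_ ?_
  · rw [Real.cot_eq_cos_div_sin]; field_simp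
  · field_simp

lemma neg_edge_form_angle {v s : ℝ} (hv : v ∈ Set.Ioo 0 π) :
    pt (-Real.cot v) (-s) = pt ((-1)*((1/Real.sin v)*Real.cos v)) ((-s)*((1/Real.sin v)*Real.sin v)) := by
  have h := edge_form_angle (s := s) hv
  have h1 := (pt_inj h).1
  have h2 := (pt_inj h).2
  refine pt_eq ?_ ?_
  · rw [show (-1:ℝ)*((1/Real.sin v)*Real.cos v) = -(1*((1/Real.sin v)*Real.cos v)) by ring, ← h1]
  · have hs := (sin_pos_of_Ioo hv).ne'
    field_simp

lemma not_single_of_NS {i : Fin n} (hns : i ∈ NS θ) : ¬ IsSingle θ i := by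
  simpa [NS] using hns

-- ===================== role descriptions =====================

lemma roleZL (hθ : ∀ i, θ i ∈ Set.Ioo 0 π) {i : Fin n} (hns : i ∈ NS θ) (hpi : θ i ≠ π/2)
    (hr : rnk θ i % 2 = 0) :
    dataB θ i = zz θ (eIdx θ i) ∧
    EuclideanGeometry.angle (dataA θ i) (dataB θ i) (dataC θ i) = θ i ∧
    rayOf (dataB θ i) (dataA θ i) = (zz θ (eIdx θ i), pt 1 0) ∧
    rayOf (dataB θ i) (dataC θ i) =
      (zz θ (eIdx θ i), pt (Real.cos (θ i)) (sg (eIdx θ i) * Real.sin (θ i))) ∧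
    dataA θ i ≠ dataB θ i ∧ dataC θ i ≠ dataB θ i ∧
    dataA θ i = far θ 1 (eIdx θ i) ∧ dataC θ i = zz θ (eIdx θ i + 1) := by
  have hsing := not_single_of_NS θ hns
  have he : eIdx θ i < U1 θ := eIdx_lt θ i hns hpi
  have hv : val θ (eIdx θ i) = θ i := val_eIdx θ i hns hpi
  have hIoo : θ i ∈ Set.Ioo 0 π := hθ i
  have hsin : 0 < Real.sin (θ i) := sin_pos_of_Ioo hIoo
  have hBA : dataB θ i = zz θ (eIdx θ i) := by
    rw [dataB, if_neg hsing, if_neg hpi, if_pos hr]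
  have hAA : dataA θ i = far θ 1 (eIdx θ i) := by
    rw [dataA, if_neg hsing, if_neg hpi, if_pos hr]
  have hCA : dataC θ i = zz θ (eIdx θ i + 1) := by
    rw [dataC, if_neg hsing, if_neg hpi, if_pos hr]
  have hCB : dataC θ i - dataB θ i = pt (Real.cot (θ i)) (sg (eIdx θ i)) := by
    rw [hCA, hBA, zz_sub_edge θ he, hv]
  have hjKK : eIdx θ i ≤ KK θ := by
    have : U1 θ ≤ KK θ := Nat.le_add_right _ _
    omega
  have haP : 0 < Bbig θ - 1 * X θ (eIdx θ i) := far_apos θ (Or.inl rfl) hjKK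
  have hAB : dataA θ i - dataB θ i = pt (1 * (Bbig θ - 1 * X θ (eIdx θ i))) 0 := by
    rw [hAA, hBA]; exact far_sub θ (Or.inl rfl) _
  refine ⟨hBA, ?_, ?_, ?_, ?_, ?_, hAA, hCA⟩
  · exact angle_of_data (k := 1/Real.sin (θ i)) ⟨hIoo.1.le, hIoo.2.le⟩ haP (by positivity)
      (Or.inl rfl) (sg_cases (eIdx θ i)) hAB (by rw [hCB, edge_form_angle hIoo])
  · rw [hBA] at hAB ⊢
    exact ray_master haP (by norm_num) (by rw [hAB]; exact pt_eq (by ring) (by ring))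
  · rw [hBA] at hCB ⊢
    exact ray_master (k := 1/Real.sin (θ i)) (by positivity) (unit_dir (sg_cases (eIdx θ i)))
      (by rw [hCB, edge_form_ray hIoo])
  · exact ne_of_sub hAB (Or.inl (by positivity))
  · exact ne_of_sub hCB (Or.inr (by rcases sg_cases (eIdx θ i) with h|h <;> rw [h] <;> norm_num))

lemma unit_dir2 {v x s : ℝ} (hx : x = 1 ∨ x = -1) (hs : s = 1 ∨ s = -1) :
    (x * Real.cos v)^2 + (s * Real.sin v)^2 = 1 := by
  have hx2 : x^2 = 1 := by rcases hx with h|h <;> simp [h]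
  have hs2 : s^2 = 1 := by rcases hs with h|h <;> simp [h]
  have := Real.sin_sq_add_cos_sq v
  nlinarith

lemma neg_edge_form_ray {v s : ℝ} (hv : v ∈ Set.Ioo 0 π) :
    pt (-Real.cot v) (-s) = pt ((1/Real.sin v)*((-1)*Real.cos v)) ((1/Real.sin v)*((-s)*Real.sin v)) := by
  have hs := (sin_pos_of_Ioo hv).ne'
  refine pt_eq ?_ ?_
  · rw [Real.cot_eq_cos_div_sin]; field_simp
  · field_simp

lemma roleZR (hθ : ∀ i, θ i ∈ Set.Ioo 0 π) {i : Fin n} (hns : i ∈ NS θ) (hpi : θ i ≠ π/2)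
    (hr : rnk θ i % 2 = 1) :
    dataB θ i = zz θ (eIdx θ i + 1) ∧
    EuclideanGeometry.angle (dataA θ i) (dataB θ i) (dataC θ i) = θ i ∧
    rayOf (dataB θ i) (dataA θ i) = (zz θ (eIdx θ i + 1), pt (-1) 0) ∧
    rayOf (dataB θ i) (dataC θ i) =
      (zz θ (eIdx θ i + 1), pt ((-1)*Real.cos (θ i)) ((-sg (eIdx θ i)) * Real.sin (θ i))) ∧
    dataA θ i ≠ dataB θ i ∧ dataC θ i ≠ dataB θ i ∧
    dataA θ i = far θ (-1) (eIdx θ i + 1) ∧ dataC θ i = zz θ (eIdx θ i) := by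
  have hsing := not_single_of_NS θ hns
  have he : eIdx θ i < U1 θ := eIdx_lt θ i hns hpi
  have hv : val θ (eIdx θ i) = θ i := val_eIdx θ i hns hpi
  have hIoo : θ i ∈ Set.Ioo 0 π := hθ i
  have hsin : 0 < Real.sin (θ i) := sin_pos_of_Ioo hIoo
  have hr0 : ¬ (rnk θ i % 2 = 0) := by omega
  have hBA : dataB θ i = zz θ (eIdx θ i + 1) := by
    rw [dataB, if_neg hsing, if_neg hpi, if_neg hr0]
  have hAA : dataA θ i = far θ (-1) (eIdx θ i + 1) := by
    rw [dataA, if_neg hsing, if_neg hpi, if_neg hr0]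
  have hCA : dataC θ i = zz θ (eIdx θ i) := by
    rw [dataC, if_neg hsing, if_neg hpi, if_neg hr0]
  have hCB : dataC θ i - dataB θ i = pt (-Real.cot (θ i)) (-sg (eIdx θ i)) := by
    rw [hCA, hBA, sub_swap (zz_sub_edge θ he), hv]
  have hjKK : eIdx θ i + 1 ≤ KK θ := by
    have : U1 θ ≤ KK θ := Nat.le_add_right _ _
    omega
  have haP : 0 < Bbig θ - (-1) * X θ (eIdx θ i + 1) := far_apos θ (Or.inr rfl) hjKK
  have hAB : dataA θ i - dataB θ i = pt ((-1) * (Bbig θ - (-1) * X θ (eIdx θ i + 1))) 0 := by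
    rw [hAA, hBA]; exact far_sub θ (Or.inr rfl) _
  have hsgn : -sg (eIdx θ i) = 1 ∨ -sg (eIdx θ i) = -1 := by
    rcases sg_cases (eIdx θ i) with h|h <;> rw [h] <;> simp
  refine ⟨hBA, ?_, ?_, ?_, ?_, ?_, hAA, hCA⟩
  · refine angle_of_data (k := 1/Real.sin (θ i)) ⟨hIoo.1.le, hIoo.2.le⟩ haP (by positivity)
      (Or.inr rfl) hsgn hAB ?_
    rw [hCB, neg_edge_form_angle hIoo]
  · rw [hBA] at hAB ⊢
    refine ray_master (k := Bbig θ - (-1)*X θ (eIdx θ i + 1)) haP (by norm_num) ?_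
    rw [hAB]; exact pt_eq (by ring) (by ring)
  · rw [hBA] at hCB ⊢
    refine ray_master (k := 1/Real.sin (θ i)) (by positivity)
      (unit_dir2 (Or.inr rfl) hsgn) ?_
    rw [hCB, neg_edge_form_ray hIoo]
  · refine ne_of_sub hAB (Or.inl ?_)
    have : (-1) * (Bbig θ - (-1) * X θ (eIdx θ i + 1)) < 0 := by nlinarith
    exact this.ne
  · refine ne_of_sub hCB (Or.inr ?_)
    rcases sg_cases (eIdx θ i) with h|h <;> rw [h] <;> norm_num

lemma GG_eq (hpi2 : (π/2 : ℝ) = π/2) : True := trivial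

lemma roleV (hθ : ∀ i, θ i ∈ Set.Ioo 0 π) {i : Fin n} (hns : i ∈ NS θ) (hpi : θ i = π/2) :
    ∃ εi σV : ℝ, (εi = 1 ∨ εi = -1) ∧ (σV = 1 ∨ σV = -1) ∧
    dataB θ i = zz θ (jV θ i) ∧
    EuclideanGeometry.angle (dataA θ i) (dataB θ i) (dataC θ i) = θ i ∧
    rayOf (dataB θ i) (dataA θ i) = (zz θ (jV θ i), pt εi 0) ∧
    rayOf (dataB θ i) (dataC θ i) = (zz θ (jV θ i), pt 0 σV) ∧
    dataA θ i ≠ dataB θ i ∧ dataC θ i ≠ dataB θ i ∧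
    (εi = 1 ↔ rnk θ i % 2 = 0) ∧
    σV = ((jT θ i % 2 : ℕ) : ℝ) - ((jV θ i % 2 : ℕ) : ℝ) ∧
    dataA θ i = far θ εi (jV θ i) ∧ dataC θ i = zz θ (jT θ i) := by
  have hsing := not_single_of_NS θ hns
  set k := rnk θ i / 2 with hkdef
  have hkG : k < GG θ := by
    have := k_bound θ hns
    rw [← hkdef] at this
    rw [hpi] at this
    rw [GG]
    exact this
  have hGNB : GG θ ≤ 2 * NB θ := by rw [NB]; omega
  have hjV : jV θ i = U1 θ + 2*(k/2) + (k % 2) := rfl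
  have hjT : jT θ i = U1 θ + 2*(k/2) + (1 - k % 2) := rfl
  have hjVKK : jV θ i ≤ KK θ := by rw [hjV, KK]; omega
  have hjTKK : jT θ i ≤ KK θ := by rw [hjT, KK]; omega
  have hXeq : X θ (jT θ i) = X θ (jV θ i) := by
    rw [hjV, hjT, show U1 θ + 2*(k/2) + (k%2) = U1 θ + (2*(k/2) + (k%2)) by omega,
      show U1 θ + 2*(k/2) + (1 - k%2) = U1 θ + (2*(k/2) + (1 - k%2)) by omega,
      X_block, X_block]
    have : (2*(k/2) + (k%2))/2 = (2*(k/2) + (1 - k%2))/2 := by omega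
    rw [this]
  have hpar : jV θ i % 2 ≠ jT θ i % 2 := by
    rw [hjV, hjT]; omega
  set σV : ℝ := ((jT θ i % 2 : ℕ) : ℝ) - ((jV θ i % 2 : ℕ) : ℝ) with hσdef
  have hσ : σV = 1 ∨ σV = -1 := by
    have h1 : jV θ i % 2 = 0 ∨ jV θ i % 2 = 1 := by omega
    have h2 : jT θ i % 2 = 0 ∨ jT θ i % 2 = 1 := by omega
    rcases h1 with h1|h1 <;> rcases h2 with h2|h2 <;>
      simp [hσdef, h1, h2] at hpar ⊢
  set εi : ℝ := if rnk θ i % 2 = 0 then (1:ℝ) else -1 with hεdef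
  have hε : εi = 1 ∨ εi = -1 := by rw [hεdef]; split <;> simp
  have hBA : dataB θ i = zz θ (jV θ i) := by rw [dataB, if_neg hsing, if_pos hpi]
  have hAA : dataA θ i = far θ εi (jV θ i) := by rw [dataA, if_neg hsing, if_pos hpi]
  have hCA : dataC θ i = zz θ (jT θ i) := by rw [dataC, if_neg hsing, if_pos hpi]
  have hCB : dataC θ i - dataB θ i = pt 0 σV := by
    rw [hCA, hBA, zz, zz, pt_sub, hXeq, sub_self]
  have haP : 0 < Bbig θ - εi * X θ (jV θ i) := far_apos θ hε hjVKK
  have hAB : dataA θ i - dataB θ i = pt (εi * (Bbig θ - εi * X θ (jV θ i))) 0 := by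
    rw [hAA, hBA]; exact far_sub θ hε _
  have hpi2 : (π/2 : ℝ) ∈ Set.Icc 0 π := by
    constructor
    · positivity
    · linarith [Real.pi_pos]
  refine ⟨εi, σV, hε, hσ, hBA, ?_, ?_, ?_, ?_, ?_, ?_, rfl, hAA, hCA⟩
  · rw [hpi]
    refine angle_of_data (k := 1) hpi2 haP one_pos hε hσ hAB ?_
    rw [hCB]
    refine pt_eq ?_ ?_ <;> simp [Real.cos_pi_div_two, Real.sin_pi_div_two]
  · rw [hBA] at hAB ⊢
    refine ray_master (k := Bbig θ - εi * X θ (jV θ i)) haP ?_ ?_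
    · rcases hε with h|h <;> rw [h] <;> norm_num
    · rw [hAB]; exact pt_eq (by ring) (by ring)
  · rw [hBA] at hCB ⊢
    refine ray_master (k := 1) one_pos ?_ ?_
    · rcases hσ with h|h <;> rw [h] <;> norm_num
    · rw [hCB]; exact pt_eq (by ring) (by ring)
  · refine ne_of_sub hAB (Or.inl ?_)
    rcases hε with h|h <;> rw [h] at haP ⊢ <;> nlinarith
  · refine ne_of_sub hCB (Or.inr ?_)
    rcases hσ with h|h <;> rw [h] <;> norm_num
  · rw [hεdef]
    constructor
    · intro h
      by_contra hc
      rw [if_neg hc] at h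
      norm_num at h
    · intro h; rw [if_pos h]

lemma roleS0 (hθ : ∀ i, θ i ∈ Set.Ioo 0 π) {i : Fin n} (hsing : IsSingle θ i)
    (ht2 : tIdx θ i % 2 = 0) (htr : tIdx θ i + 1 < rr θ) :
    dataB θ i = basePt 0 ∧
    EuclideanGeometry.angle (dataA θ i) (dataB θ i) (dataC θ i) = θ i ∧
    rayOf (dataB θ i) (dataA θ i) = (basePt 0, pt 1 0) ∧
    rayOf (dataB θ i) (dataC θ i) = (basePt 0, pt (Real.cos (θ i)) (Real.sin (θ i))) ∧
    dataA θ i ≠ dataB θ i ∧ dataC θ i ≠ dataB θ i ∧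
    dataA θ i = basePt 1 ∧ dataC θ i = Rpt θ (tIdx θ i / 2) := by
  have hIoo : θ i ∈ Set.Ioo 0 π := hθ i
  have ht1 : ¬ (tIdx θ i % 2 = 1) := by omega
  set t := tIdx θ i with htdef
  set l := t / 2 with hldef
  have h2l : 2*l = t := by omega
  have h2l1 : 2*l+1 < rr θ := by omega
  have hsv : sval θ (2*l) = θ i := by rw [h2l, htdef]; exact sval_tIdx θ hsing
  have hρ : 0 < rho θ l := rho_pos θ hθ h2l1
  have hBA : dataB θ i = basePt 0 := by
    rw [dataB, if_pos hsing, if_neg ht1, if_pos htr]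
  have hAA : dataA θ i = basePt 1 := by
    rw [dataA, if_pos hsing, if_neg ht1, if_pos htr]
  have hCA : dataC θ i = Rpt θ l := by
    rw [dataC, if_pos hsing, if_neg ht1, if_pos htr]
  have hAB : dataA θ i - dataB θ i = pt 1 0 := by
    rw [hAA, hBA, basePt_sub]; exact pt_eq (by norm_num) rfl
  have hCB : dataC θ i - dataB θ i
      = pt (rho θ l * Real.cos (θ i)) (rho θ l * Real.sin (θ i)) := by
    rw [hCA, hBA, Rpt_sub0, hsv]
  have hsin : 0 < Real.sin (θ i) := sin_pos_of_Ioo hIoo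
  refine ⟨hBA, ?_, ?_, ?_, ?_, ?_, hAA, hCA⟩
  · refine angle_of_data (k := rho θ l) (a := 1) ⟨hIoo.1.le, hIoo.2.le⟩ one_pos hρ
      (Or.inl rfl) (Or.inl rfl) ?_ ?_
    · rw [hAB]; exact pt_eq (by ring) rfl
    · rw [hCB]; exact pt_eq (by ring) (by ring)
  · rw [hBA] at hAB ⊢
    refine ray_master (k := 1) one_pos (by norm_num) ?_
    rw [hAB]; exact pt_eq (by ring) (by ring)
  · rw [hBA] at hCB ⊢
    refine ray_master (k := rho θ l) hρ ?_ ?_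
    · rw [← Real.sin_sq_add_cos_sq (θ i)]; ring
    · rw [hCB]
  · exact ne_of_sub hAB (Or.inl one_ne_zero)
  · exact ne_of_sub hCB (Or.inr (by positivity))

lemma roleS1 (hθ : ∀ i, θ i ∈ Set.Ioo 0 π) {i : Fin n} (hsing : IsSingle θ i)
    (ht2 : tIdx θ i % 2 = 1) :
    dataB θ i = basePt 1 ∧
    EuclideanGeometry.angle (dataA θ i) (dataB θ i) (dataC θ i) = θ i ∧
    rayOf (dataB θ i) (dataA θ i) = (basePt 1, pt 1 0) ∧
    rayOf (dataB θ i) (dataC θ i) = (basePt 1, pt (Real.cos (θ i)) (Real.sin (θ i))) ∧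
    dataA θ i ≠ dataB θ i ∧ dataC θ i ≠ dataB θ i ∧
    dataA θ i = basePt 2 ∧ dataC θ i = Rpt θ (tIdx θ i / 2) := by
  have hIoo : θ i ∈ Set.Ioo 0 π := hθ i
  set t := tIdx θ i with htdef
  set l := t / 2 with hldef
  have h2l1t : 2*l+1 = t := by omega
  have htl : t < rr θ := tIdx_lt θ hsing
  have h2l1 : 2*l+1 < rr θ := by omega
  have hsv : sval θ (2*l+1) = θ i := by rw [h2l1t, htdef]; exact sval_tIdx θ hsing
  obtain ⟨hpa, hpab, hpb⟩ := sval_lt_pair θ hθ h2l1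
  set q := Real.sin (sval θ (2*l)) / Real.sin (sval θ (2*l+1) - sval θ (2*l)) with hqdef
  have hq : 0 < q := by
    apply div_pos
    · exact Real.sin_pos_of_pos_of_lt_pi hpa (by linarith)
    · exact Real.sin_pos_of_pos_of_lt_pi (by linarith) (by linarith)
  have hBA : dataB θ i = basePt 1 := by rw [dataB, if_pos hsing, if_pos ht2]
  have hAA : dataA θ i = basePt 2 := by rw [dataA, if_pos hsing, if_pos ht2]
  have hCA : dataC θ i = Rpt θ l := by rw [dataC, if_pos hsing, if_pos ht2]
  have hAB : dataA θ i - dataB θ i = pt 1 0 := by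
    rw [hAA, hBA, basePt_sub]; exact pt_eq (by norm_num) rfl
  have hCB : dataC θ i - dataB θ i = pt (q * Real.cos (θ i)) (q * Real.sin (θ i)) := by
    rw [hCA, hBA, Rpt_sub1 θ hθ h2l1, ← hqdef, hsv]
  have hsin : 0 < Real.sin (θ i) := sin_pos_of_Ioo hIoo
  refine ⟨hBA, ?_, ?_, ?_, ?_, ?_, hAA, hCA⟩
  · refine angle_of_data (k := q) (a := 1) ⟨hIoo.1.le, hIoo.2.le⟩ one_pos hq
      (Or.inl rfl) (Or.inl rfl) ?_ ?_
    · rw [hAB]; exact pt_eq (by ring) rfl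
    · rw [hCB]; exact pt_eq (by ring) (by ring)
  · rw [hBA] at hAB ⊢
    refine ray_master (k := 1) one_pos (by norm_num) ?_
    rw [hAB]; exact pt_eq (by ring) (by ring)
  · rw [hBA] at hCB ⊢
    refine ray_master (k := q) hq ?_ ?_
    · rw [← Real.sin_sq_add_cos_sq (θ i)]; ring
    · rw [hCB]
  · exact ne_of_sub hAB (Or.inl one_ne_zero)
  · exact ne_of_sub hCB (Or.inr (by positivity))

lemma roleS2 (hθ : ∀ i, θ i ∈ Set.Ioo 0 π) {i : Fin n} (hsing : IsSingle θ i)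
    (ht2 : tIdx θ i % 2 = 0) (htr : ¬ (tIdx θ i + 1 < rr θ)) :
    dataB θ i = basePt 2 ∧
    EuclideanGeometry.angle (dataA θ i) (dataB θ i) (dataC θ i) = θ i ∧
    rayOf (dataB θ i) (dataA θ i) = (basePt 2, pt 1 0) ∧
    rayOf (dataB θ i) (dataC θ i) = (basePt 2, pt (Real.cos (θ i)) (Real.sin (θ i))) ∧
    dataA θ i ≠ dataB θ i ∧ dataC θ i ≠ dataB θ i ∧
    dataA θ i = basePt 3 ∧ dataC θ i = RoddPt θ := by
  have hIoo : θ i ∈ Set.Ioo 0 π := hθ i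
  have ht1 : ¬ (tIdx θ i % 2 = 1) := by omega
  have ht : tIdx θ i < rr θ := tIdx_lt θ hsing
  have hteq : tIdx θ i = rr θ - 1 := by omega
  have hsv : sval θ (rr θ - 1) = θ i := by rw [← hteq]; exact sval_tIdx θ hsing
  have hBA : dataB θ i = basePt 2 := by rw [dataB, if_pos hsing, if_neg ht1, if_neg htr]
  have hAA : dataA θ i = basePt 3 := by rw [dataA, if_pos hsing, if_neg ht1, if_neg htr]
  have hCA : dataC θ i = RoddPt θ := by rw [dataC, if_pos hsing, if_neg ht1, if_neg htr]
  have hAB : dataA θ i - dataB θ i = pt 1 0 := by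
    rw [hAA, hBA, basePt_sub]; exact pt_eq (by norm_num) rfl
  have hCB : dataC θ i - dataB θ i = pt (Real.cos (θ i)) (Real.sin (θ i)) := by
    rw [hCA, hBA, RoddPt_sub, hsv]
  have hsin : 0 < Real.sin (θ i) := sin_pos_of_Ioo hIoo
  refine ⟨hBA, ?_, ?_, ?_, ?_, ?_, hAA, hCA⟩
  · refine angle_of_data (k := 1) (a := 1) ⟨hIoo.1.le, hIoo.2.le⟩ one_pos one_pos
      (Or.inl rfl) (Or.inl rfl) ?_ ?_
    · rw [hAB]; exact pt_eq (by ring) rfl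
    · rw [hCB]; exact pt_eq (by ring) (by ring)
  · rw [hBA] at hAB ⊢
    refine ray_master (k := 1) one_pos (by norm_num) ?_
    rw [hAB]; exact pt_eq (by ring) (by ring)
  · rw [hBA] at hCB ⊢
    refine ray_master (k := 1) one_pos ?_ ?_
    · rw [← Real.sin_sq_add_cos_sq (θ i)]; ring
    · rw [hCB]; exact pt_eq (by ring) (by ring)
  · exact ne_of_sub hAB (Or.inl one_ne_zero)
  · exact ne_of_sub hCB (Or.inr hsin.ne')

-- ===================== membership lemmas =====================

lemma zz_mem {j : ℕ} (hj : j ≤ KK θ) : zz θ j ∈ P0 θ := by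
  rw [P0]
  simp only [Finset.mem_union, Finset.mem_image, Finset.mem_range]
  left; left; left; left
  exact ⟨j, by omega, rfl⟩

lemma far_mem (ε : ℝ) (hε : ε = 1 ∨ ε = -1) (j : ℕ) : far θ ε j ∈ P0 θ := by
  have hmod : j % 2 = 0 ∨ j % 2 = 1 := by omega
  rw [P0]
  simp only [Finset.mem_union, Finset.mem_insert, Finset.mem_singleton]
  left; left; left; right
  rcases hε with rfl|rfl <;> rcases hmod with hm|hm
  · left; simp [far, hm]
  · right; left; simp [far, hm]
  · right; right; left; simp [far, hm]
  · right; right; right; simp [far, hm]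

lemma basePt_mem {b : ℕ} (hb : b < 4) : basePt b ∈ P0 θ := by
  rw [P0]
  simp only [Finset.mem_union, Finset.mem_image, Finset.mem_range]
  left; left; right
  exact ⟨b, hb, rfl⟩

lemma Rpt_mem {l : ℕ} (hl : l < rr θ / 2 + 1) : Rpt θ l ∈ P0 θ := by
  rw [P0]
  simp only [Finset.mem_union, Finset.mem_image, Finset.mem_range]
  left; right
  exact ⟨l, hl, rfl⟩

lemma RoddPt_mem : RoddPt θ ∈ P0 θ := by
  rw [P0]
  simp only [Finset.mem_union, Finset.mem_insert, Finset.mem_singleton]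
  right; trivial

-- ===================== collision lemmas =====================

lemma X_run_succ {e e' : ℕ} (hee : e ≤ e') (he' : e' < U1 θ) (hv : val θ e = val θ e') :
    X θ (e'+1) = X θ (e+1) + ((e' - e : ℕ) : ℝ) * Real.cot (val θ e) := by
  have hsum : X θ (e'+1) - X θ (e+1) = ∑ g ∈ Finset.Ico (e+1) (e'+1), off θ g := by
    rw [X, X, ← Finset.sum_Ico_eq_sub _ (by omega)]
  have hconst : ∀ g ∈ Finset.Ico (e+1) (e'+1), off θ g = Real.cot (val θ e) := by
    intro g hg
    rw [Finset.mem_Ico] at hg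
    have hgU : g < U1 θ := by omega
    have h1 : val θ e ≤ val θ g := val_sorted θ (by omega) hgU
    have h2 : val θ g ≤ val θ e' := val_sorted θ (by omega) he'
    have : val θ g = val θ e := le_antisymm (hv ▸ h2) h1
    rw [off, if_pos hgU, this]
  rw [Finset.sum_congr rfl hconst, Finset.sum_const, Nat.card_Ico, nsmul_eq_mul] at hsum
  have : e' + 1 - (e + 1) = e' - e := by omega
  rw [this] at hsum
  linarith

lemma X_inj_run (hθ : ∀ i, θ i ∈ Set.Ioo 0 π) {e e' : ℕ} (he : e < U1 θ) (he' : e' < U1 θ)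
    (hv : val θ e = val θ e') (hX : X θ e = X θ e') : e = e' := by
  rcases lt_trichotomy e e' with h|h|h
  · exfalso
    have hrun := X_run θ (le_of_lt h) he' hv
    have hcot := cot_ne_zero (val_mem θ hθ he).1 (val_mem θ hθ he).2
    have hne : ((e' - e : ℕ) : ℝ) ≠ 0 := by
      have : 0 < e' - e := by omega
      positivity
    rw [hX] at hrun
    have hc : ((e' - e : ℕ) : ℝ) * Real.cot (val θ e) = 0 := by linarith
    exact (mul_ne_zero hne hcot) hc
  · exact h
  · exfalso
    have hrun := X_run θ (le_of_lt h) he hv.symm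
    have hcot := cot_ne_zero (val_mem θ hθ he').1 (val_mem θ hθ he').2
    have hne : ((e - e' : ℕ) : ℝ) ≠ 0 := by
      have : 0 < e - e' := by omega
      positivity
    rw [hX] at hrun
    have hc : ((e - e' : ℕ) : ℝ) * Real.cot (val θ e') = 0 := by linarith
    exact (mul_ne_zero hne hcot) hc

lemma X_inj_run_succ (hθ : ∀ i, θ i ∈ Set.Ioo 0 π) {e e' : ℕ} (he : e < U1 θ) (he' : e' < U1 θ)
    (hv : val θ e = val θ e') (hX : X θ (e+1) = X θ (e'+1)) : e = e' := by
  rcases lt_trichotomy e e' with h|h|h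
  · exfalso
    have hrun := X_run_succ θ (le_of_lt h) he' hv
    have hcot := cot_ne_zero (val_mem θ hθ he).1 (val_mem θ hθ he).2
    have hne : ((e' - e : ℕ) : ℝ) ≠ 0 := by
      have : 0 < e' - e := by omega
      positivity
    rw [hX] at hrun
    have hc : ((e' - e : ℕ) : ℝ) * Real.cot (val θ e) = 0 := by linarith
    exact (mul_ne_zero hne hcot) hc
  · exact h
  · exfalso
    have hrun := X_run_succ θ (le_of_lt h) he hv.symm
    have hcot := cot_ne_zero (val_mem θ hθ he').1 (val_mem θ hθ he').2
    have hne : ((e - e' : ℕ) : ℝ) ≠ 0 := by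
      have : 0 < e - e' := by omega
      positivity
    rw [hX] at hrun
    have hc : ((e - e' : ℕ) : ℝ) * Real.cot (val θ e') = 0 := by linarith
    exact (mul_ne_zero hne hcot) hc

lemma eIdx_inj {i j : Fin n} (hi : i ∈ NS θ) (hpi : θ i ≠ π/2)
    (hj : j ∈ NS θ) (hpj : θ j ≠ π/2) (h : eIdx θ i = eIdx θ j) : key θ i = key θ j := by
  have hmi := memZU_of θ i hi hpi
  have hmj := memZU_of θ j hj hpj
  rw [eIdx, dif_pos hmi, eIdx, dif_pos hmj] at h
  have hfin : ((wIso θ).symm ⟨toLex (key θ i), hmi⟩) = ((wIso θ).symm ⟨toLex (key θ j), hmj⟩) :=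
    Fin.ext h
  have := congrArg (fun x => ((wIso θ) x : ℝ ×ₗ ℕ)) hfin
  simp only [OrderIso.apply_symm_apply] at this
  exact congrArg ofLex this

lemma cos_eq_zero_pi2 {v : ℝ} (hv : v ∈ Set.Ioo 0 π) (h : Real.cos v = 0) : v = π/2 := by
  apply cos_inj_Ioo hv ⟨by positivity, by linarith [Real.pi_pos]⟩
  rw [h, Real.cos_pi_div_two]

lemma sig_unique {B B' h d h' d' : E2} {dy dy' : ℝ}
    (hhy : h 1 = 0) (hdy : d 1 = dy) (hdy0 : dy ≠ 0)
    (hhy' : h' 1 = 0) (hdy' : d' 1 = dy') (hdy0' : dy' ≠ 0)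
    (heq : ({(B, h), (B, d)} : Set (E2 × E2)) = {(B', h'), (B', d')}) :
    B = B' ∧ h = h' ∧ d = d' := by
  rw [Set.pair_eq_pair_iff] at heq
  rcases heq with ⟨h1, h2⟩ | ⟨h1, h2⟩
  · have e1 := Prod.ext_iff.mp h1
    have e2 := Prod.ext_iff.mp h2
    exact ⟨e1.1, e1.2, e2.2⟩
  · exfalso
    have e1 := Prod.ext_iff.mp h1
    have h2' : h = d' := e1.2
    have := congrArg (fun v : E2 => v 1) h2'
    rw [hhy, hdy'] at this
    exact hdy0' this.symm

-- ===================== injectivity =====================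

lemma pt_y (x y : ℝ) : pt x y 1 = y := by simp [pt]

lemma base_ne_zz (b j : ℕ) : basePt b ≠ zz θ j := by
  intro h
  rw [basePt, zz] at h
  have hy := (pt_inj h).2
  have : j % 2 = 0 ∨ j % 2 = 1 := by omega
  rcases this with hm|hm <;> rw [hm] at hy <;> norm_num at hy

lemma zz_eq_parts {j j' : ℕ} (h : zz θ j = zz θ j') : X θ j = X θ j' ∧ j % 2 = j' % 2 := by
  have h2 := pt_inj h
  exact ⟨h2.1, Nat.cast_inj.mp h2.2⟩

lemma basePt_eq_nat {b b' : ℕ} (h : basePt b = basePt b') : b = b' := by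
  have := (pt_inj h).1
  exact_mod_cast this

lemma role_split (i : Fin n) :
    (IsSingle θ i ∧ tIdx θ i % 2 = 1) ∨
    (IsSingle θ i ∧ tIdx θ i % 2 = 0 ∧ tIdx θ i + 1 < rr θ) ∨
    (IsSingle θ i ∧ tIdx θ i % 2 = 0 ∧ ¬(tIdx θ i + 1 < rr θ)) ∨
    (i ∈ NS θ ∧ θ i = π/2) ∨
    (i ∈ NS θ ∧ θ i ≠ π/2 ∧ rnk θ i % 2 = 0) ∨
    (i ∈ NS θ ∧ θ i ≠ π/2 ∧ rnk θ i % 2 = 1) := by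
  by_cases hs : IsSingle θ i
  · rcases Nat.even_or_odd (tIdx θ i) with he|ho
    · by_cases htr : tIdx θ i + 1 < rr θ
      · exact Or.inr (Or.inl ⟨hs, Nat.even_iff.mp he, htr⟩)
      · exact Or.inr (Or.inr (Or.inl ⟨hs, Nat.even_iff.mp he, htr⟩))
    · exact Or.inl ⟨hs, Nat.odd_iff.mp ho⟩
  · have hns : i ∈ NS θ := by simp [NS, hs]
    by_cases hpi : θ i = π/2
    · exact Or.inr (Or.inr (Or.inr (Or.inl ⟨hns, hpi⟩)))
    · rcases Nat.even_or_odd (rnk θ i) with he|ho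
      · exact Or.inr (Or.inr (Or.inr (Or.inr (Or.inl ⟨hns, hpi, Nat.even_iff.mp he⟩))))
      · exact Or.inr (Or.inr (Or.inr (Or.inr (Or.inr ⟨hns, hpi, Nat.odd_iff.mp ho⟩))))
lemma sg_ne (e : ℕ) : sg e ≠ 0 := by
  rcases sg_cases e with h|h <;> rw [h] <;> norm_num

lemma main_inj (hθ : ∀ i, θ i ∈ Set.Ioo 0 π) :
    Function.Injective (fun i =>
      ({rayOf (dataB θ i) (dataA θ i), rayOf (dataB θ i) (dataC θ i)} : Set (E2 × E2))) := by
  have hsin : ∀ x : Fin n, Real.sin (θ x) ≠ 0 := fun x => (sin_pos_of_Ioo (hθ x)).ne'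
  have hsgsin : ∀ (x : Fin n) (e : ℕ), sg e * Real.sin (θ x) ≠ 0 :=
    fun x e => mul_ne_zero (sg_ne e) (hsin x)
  have hnsgsin : ∀ (x : Fin n) (e : ℕ), (-sg e) * Real.sin (θ x) ≠ 0 :=
    fun x e => mul_ne_zero (neg_ne_zero.mpr (sg_ne e)) (hsin x)
  intro i j hset
  simp only at hset
  rcases role_split θ i with hi|hi|hi|hi|hi|hi
  case _ => -- i : S1
    obtain ⟨hBi, -, hRAi, hRCi, -, -, -, -⟩ := roleS1 θ hθ hi.1 hi.2
    rcases role_split θ j with hj|hj|hj|hj|hj|hj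
    · obtain ⟨hBj, -, hRAj, hRCj, -, -, -, -⟩ := roleS1 θ hθ hj.1 hj.2
      rw [hRAi, hRCi, hRAj, hRCj] at hset
      obtain ⟨hB, hH, hD⟩ := sig_unique (pt_y _ _) (pt_y _ _) (hsin i) (pt_y _ _) (pt_y _ _) (hsin j) hset
      exact single_inj θ hi.1 hj.1 (cos_inj_Ioo (hθ i) (hθ j) (pt_inj hD).1)
    · obtain ⟨hBj, -, hRAj, hRCj, -, -, -, -⟩ := roleS0 θ hθ hj.1 hj.2.1 hj.2.2
      rw [hRAi, hRCi, hRAj, hRCj] at hset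
      obtain ⟨hB, hH, hD⟩ := sig_unique (pt_y _ _) (pt_y _ _) (hsin i) (pt_y _ _) (pt_y _ _) (hsin j) hset
      have := basePt_eq_nat hB; omega
    · obtain ⟨hBj, -, hRAj, hRCj, -, -, -, -⟩ := roleS2 θ hθ hj.1 hj.2.1 hj.2.2
      rw [hRAi, hRCi, hRAj, hRCj] at hset
      obtain ⟨hB, hH, hD⟩ := sig_unique (pt_y _ _) (pt_y _ _) (hsin i) (pt_y _ _) (pt_y _ _) (hsin j) hset
      have := basePt_eq_nat hB; omega
    · obtain ⟨εj, σj, hεj, hσj, hBj, -, hRAj, hRCj, -, -, hiffj, hσdefj, -, -⟩ := roleV θ hθ hj.1 hj.2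
      rw [hRAi, hRCi, hRAj, hRCj] at hset
      obtain ⟨hB, hH, hD⟩ := sig_unique (pt_y _ _) (pt_y _ _) (hsin i)
        (pt_y _ _) (pt_y _ _) (by rcases hσj with h|h <;> rw [h] <;> norm_num) hset
      exact absurd hB (base_ne_zz θ _ _)
    · obtain ⟨hBj, -, hRAj, hRCj, -, -, -, -⟩ := roleZL θ hθ hj.1 hj.2.1 hj.2.2
      rw [hRAi, hRCi, hRAj, hRCj] at hset
      obtain ⟨hB, hH, hD⟩ := sig_unique (pt_y _ _) (pt_y _ _) (hsin i)
        (pt_y _ _) (pt_y _ _) (hsgsin j _) hset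
      exact absurd hB (base_ne_zz θ _ _)
    · obtain ⟨hBj, -, hRAj, hRCj, -, -, -, -⟩ := roleZR θ hθ hj.1 hj.2.1 hj.2.2
      rw [hRAi, hRCi, hRAj, hRCj] at hset
      obtain ⟨hB, hH, hD⟩ := sig_unique (pt_y _ _) (pt_y _ _) (hsin i)
        (pt_y _ _) (pt_y _ _) (hnsgsin j _) hset
      exact absurd hB (base_ne_zz θ _ _)
  case _ => -- i : S0
    obtain ⟨hBi, -, hRAi, hRCi, -, -, -, -⟩ := roleS0 θ hθ hi.1 hi.2.1 hi.2.2
    rcases role_split θ j with hj|hj|hj|hj|hj|hj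
    · obtain ⟨hBj, -, hRAj, hRCj, -, -, -, -⟩ := roleS1 θ hθ hj.1 hj.2
      rw [hRAi, hRCi, hRAj, hRCj] at hset
      obtain ⟨hB, hH, hD⟩ := sig_unique (pt_y _ _) (pt_y _ _) (hsin i) (pt_y _ _) (pt_y _ _) (hsin j) hset
      have := basePt_eq_nat hB; omega
    · obtain ⟨hBj, -, hRAj, hRCj, -, -, -, -⟩ := roleS0 θ hθ hj.1 hj.2.1 hj.2.2
      rw [hRAi, hRCi, hRAj, hRCj] at hset
      obtain ⟨hB, hH, hD⟩ := sig_unique (pt_y _ _) (pt_y _ _) (hsin i) (pt_y _ _) (pt_y _ _) (hsin j) hset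
      exact single_inj θ hi.1 hj.1 (cos_inj_Ioo (hθ i) (hθ j) (pt_inj hD).1)
    · obtain ⟨hBj, -, hRAj, hRCj, -, -, -, -⟩ := roleS2 θ hθ hj.1 hj.2.1 hj.2.2
      rw [hRAi, hRCi, hRAj, hRCj] at hset
      obtain ⟨hB, hH, hD⟩ := sig_unique (pt_y _ _) (pt_y _ _) (hsin i) (pt_y _ _) (pt_y _ _) (hsin j) hset
      have := basePt_eq_nat hB; omega
    · obtain ⟨εj, σj, hεj, hσj, hBj, -, hRAj, hRCj, -, -, hiffj, hσdefj, -, -⟩ := roleV θ hθ hj.1 hj.2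
      rw [hRAi, hRCi, hRAj, hRCj] at hset
      obtain ⟨hB, hH, hD⟩ := sig_unique (pt_y _ _) (pt_y _ _) (hsin i)
        (pt_y _ _) (pt_y _ _) (by rcases hσj with h|h <;> rw [h] <;> norm_num) hset
      exact absurd hB (base_ne_zz θ _ _)
    · obtain ⟨hBj, -, hRAj, hRCj, -, -, -, -⟩ := roleZL θ hθ hj.1 hj.2.1 hj.2.2
      rw [hRAi, hRCi, hRAj, hRCj] at hset
      obtain ⟨hB, hH, hD⟩ := sig_unique (pt_y _ _) (pt_y _ _) (hsin i)
        (pt_y _ _) (pt_y _ _) (hsgsin j _) hset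
      exact absurd hB (base_ne_zz θ _ _)
    · obtain ⟨hBj, -, hRAj, hRCj, -, -, -, -⟩ := roleZR θ hθ hj.1 hj.2.1 hj.2.2
      rw [hRAi, hRCi, hRAj, hRCj] at hset
      obtain ⟨hB, hH, hD⟩ := sig_unique (pt_y _ _) (pt_y _ _) (hsin i)
        (pt_y _ _) (pt_y _ _) (hnsgsin j _) hset
      exact absurd hB (base_ne_zz θ _ _)
  case _ => -- i : S2
    obtain ⟨hBi, -, hRAi, hRCi, -, -, -, -⟩ := roleS2 θ hθ hi.1 hi.2.1 hi.2.2
    rcases role_split θ j with hj|hj|hj|hj|hj|hj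
    · obtain ⟨hBj, -, hRAj, hRCj, -, -, -, -⟩ := roleS1 θ hθ hj.1 hj.2
      rw [hRAi, hRCi, hRAj, hRCj] at hset
      obtain ⟨hB, hH, hD⟩ := sig_unique (pt_y _ _) (pt_y _ _) (hsin i) (pt_y _ _) (pt_y _ _) (hsin j) hset
      have := basePt_eq_nat hB; omega
    · obtain ⟨hBj, -, hRAj, hRCj, -, -, -, -⟩ := roleS0 θ hθ hj.1 hj.2.1 hj.2.2
      rw [hRAi, hRCi, hRAj, hRCj] at hset
      obtain ⟨hB, hH, hD⟩ := sig_unique (pt_y _ _) (pt_y _ _) (hsin i) (pt_y _ _) (pt_y _ _) (hsin j) hset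
      have := basePt_eq_nat hB; omega
    · obtain ⟨hBj, -, hRAj, hRCj, -, -, -, -⟩ := roleS2 θ hθ hj.1 hj.2.1 hj.2.2
      rw [hRAi, hRCi, hRAj, hRCj] at hset
      obtain ⟨hB, hH, hD⟩ := sig_unique (pt_y _ _) (pt_y _ _) (hsin i) (pt_y _ _) (pt_y _ _) (hsin j) hset
      exact single_inj θ hi.1 hj.1 (cos_inj_Ioo (hθ i) (hθ j) (pt_inj hD).1)
    · obtain ⟨εj, σj, hεj, hσj, hBj, -, hRAj, hRCj, -, -, hiffj, hσdefj, -, -⟩ := roleV θ hθ hj.1 hj.2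
      rw [hRAi, hRCi, hRAj, hRCj] at hset
      obtain ⟨hB, hH, hD⟩ := sig_unique (pt_y _ _) (pt_y _ _) (hsin i)
        (pt_y _ _) (pt_y _ _) (by rcases hσj with h|h <;> rw [h] <;> norm_num) hset
      exact absurd hB (base_ne_zz θ _ _)
    · obtain ⟨hBj, -, hRAj, hRCj, -, -, -, -⟩ := roleZL θ hθ hj.1 hj.2.1 hj.2.2
      rw [hRAi, hRCi, hRAj, hRCj] at hset
      obtain ⟨hB, hH, hD⟩ := sig_unique (pt_y _ _) (pt_y _ _) (hsin i)
        (pt_y _ _) (pt_y _ _) (hsgsin j _) hset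
      exact absurd hB (base_ne_zz θ _ _)
    · obtain ⟨hBj, -, hRAj, hRCj, -, -, -, -⟩ := roleZR θ hθ hj.1 hj.2.1 hj.2.2
      rw [hRAi, hRCi, hRAj, hRCj] at hset
      obtain ⟨hB, hH, hD⟩ := sig_unique (pt_y _ _) (pt_y _ _) (hsin i)
        (pt_y _ _) (pt_y _ _) (hnsgsin j _) hset
      exact absurd hB (base_ne_zz θ _ _)
  case _ => -- i : V
    obtain ⟨εi, σi, hεi, hσi, hBi, -, hRAi, hRCi, -, -, hiffi, hσdefi, -, -⟩ := roleV θ hθ hi.1 hi.2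
    have hσine : σi ≠ 0 := by rcases hσi with h|h <;> rw [h] <;> norm_num
    rcases role_split θ j with hj|hj|hj|hj|hj|hj
    · obtain ⟨hBj, -, hRAj, hRCj, -, -, -, -⟩ := roleS1 θ hθ hj.1 hj.2
      rw [hRAi, hRCi, hRAj, hRCj] at hset
      obtain ⟨hB, hH, hD⟩ := sig_unique (pt_y _ _) (pt_y _ _) hσine (pt_y _ _) (pt_y _ _) (hsin j) hset
      exact absurd hB.symm (base_ne_zz θ _ _)
    · obtain ⟨hBj, -, hRAj, hRCj, -, -, -, -⟩ := roleS0 θ hθ hj.1 hj.2.1 hj.2.2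
      rw [hRAi, hRCi, hRAj, hRCj] at hset
      obtain ⟨hB, hH, hD⟩ := sig_unique (pt_y _ _) (pt_y _ _) hσine (pt_y _ _) (pt_y _ _) (hsin j) hset
      exact absurd hB.symm (base_ne_zz θ _ _)
    · obtain ⟨hBj, -, hRAj, hRCj, -, -, -, -⟩ := roleS2 θ hθ hj.1 hj.2.1 hj.2.2
      rw [hRAi, hRCi, hRAj, hRCj] at hset
      obtain ⟨hB, hH, hD⟩ := sig_unique (pt_y _ _) (pt_y _ _) hσine (pt_y _ _) (pt_y _ _) (hsin j) hset
      exact absurd hB.symm (base_ne_zz θ _ _)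
    · obtain ⟨εj, σj, hεj, hσj, hBj, -, hRAj, hRCj, -, -, hiffj, hσdefj, -, -⟩ := roleV θ hθ hj.1 hj.2
      have hσjne : σj ≠ 0 := by rcases hσj with h|h <;> rw [h] <;> norm_num
      rw [hRAi, hRCi, hRAj, hRCj] at hset
      obtain ⟨hB, hH, hD⟩ := sig_unique (pt_y _ _) (pt_y _ _) hσine (pt_y _ _) (pt_y _ _) hσjne hset
      have hεeq : εi = εj := (pt_inj hH).1
      have hXp := zz_eq_parts θ hB
      have hjVi : jV θ i = U1 θ + rnk θ i / 2 := by rw [jV]; omega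
      have hjVj : jV θ j = U1 θ + rnk θ j / 2 := by rw [jV]; omega
      have hXi : X θ (jV θ i) = X θ (U1 θ) + (((rnk θ i / 2)/2 : ℕ) : ℝ) := by
        rw [hjVi, X_block]
      have hXj : X θ (jV θ j) = X θ (U1 θ) + (((rnk θ j / 2)/2 : ℕ) : ℝ) := by
        rw [hjVj, X_block]
      have hk2 : (rnk θ i / 2)/2 = (rnk θ j / 2)/2 := by
        have hxx := hXp.1
        rw [hXi, hXj] at hxx
        have hcast : (((rnk θ i / 2)/2 : ℕ) : ℝ) = (((rnk θ j / 2)/2 : ℕ) : ℝ) := by linarith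
        exact_mod_cast hcast
      have hpar : (U1 θ + rnk θ i / 2) % 2 = (U1 θ + rnk θ j / 2) % 2 := by
        have := hXp.2
        rw [hjVi, hjVj] at this
        exact this
      have hkeq : rnk θ i / 2 = rnk θ j / 2 := by omega
      have hside : rnk θ i % 2 = rnk θ j % 2 := by
        rcases hεi with h1|h1
        · have hri := (hiffi).mp h1
          have hrj := hiffj.mp (by rw [← hεeq, h1])
          omega
        · have hri : ¬ (rnk θ i % 2 = 0) := by
            intro hc
            have := hiffi.mpr hc
            rw [h1] at this; norm_num at this
          have hrj : ¬ (rnk θ j % 2 = 0) := by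
            intro hc
            have := hiffj.mpr hc
            rw [← hεeq, h1] at this; norm_num at this
          omega
      have hveq : θ i = θ j := by rw [hi.2, hj.2]
      exact rnk_inj θ hveq (by omega)
    · obtain ⟨hBj, -, hRAj, hRCj, -, -, -, -⟩ := roleZL θ hθ hj.1 hj.2.1 hj.2.2
      rw [hRAi, hRCi, hRAj, hRCj] at hset
      obtain ⟨hB, hH, hD⟩ := sig_unique (pt_y _ _) (pt_y _ _) hσine
        (pt_y _ _) (pt_y _ _) (hsgsin j _) hset
      have := (pt_inj hD).1
      exact absurd (cos_eq_zero_pi2 (hθ j) this.symm) hj.2.1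
    · obtain ⟨hBj, -, hRAj, hRCj, -, -, -, -⟩ := roleZR θ hθ hj.1 hj.2.1 hj.2.2
      rw [hRAi, hRCi, hRAj, hRCj] at hset
      obtain ⟨hB, hH, hD⟩ := sig_unique (pt_y _ _) (pt_y _ _) hσine
        (pt_y _ _) (pt_y _ _) (hnsgsin j _) hset
      have h0 := (pt_inj hD).1
      have : Real.cos (θ j) = 0 := by linarith [h0]
      exact absurd (cos_eq_zero_pi2 (hθ j) this) hj.2.1
  case _ => -- i : ZL
    obtain ⟨hBi, -, hRAi, hRCi, -, -, -, -⟩ := roleZL θ hθ hi.1 hi.2.1 hi.2.2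
    rcases role_split θ j with hj|hj|hj|hj|hj|hj
    · obtain ⟨hBj, -, hRAj, hRCj, -, -, -, -⟩ := roleS1 θ hθ hj.1 hj.2
      rw [hRAi, hRCi, hRAj, hRCj] at hset
      obtain ⟨hB, hH, hD⟩ := sig_unique (pt_y _ _) (pt_y _ _) (hsgsin i _) (pt_y _ _) (pt_y _ _) (hsin j) hset
      exact absurd hB.symm (base_ne_zz θ _ _)
    · obtain ⟨hBj, -, hRAj, hRCj, -, -, -, -⟩ := roleS0 θ hθ hj.1 hj.2.1 hj.2.2
      rw [hRAi, hRCi, hRAj, hRCj] at hset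
      obtain ⟨hB, hH, hD⟩ := sig_unique (pt_y _ _) (pt_y _ _) (hsgsin i _) (pt_y _ _) (pt_y _ _) (hsin j) hset
      exact absurd hB.symm (base_ne_zz θ _ _)
    · obtain ⟨hBj, -, hRAj, hRCj, -, -, -, -⟩ := roleS2 θ hθ hj.1 hj.2.1 hj.2.2
      rw [hRAi, hRCi, hRAj, hRCj] at hset
      obtain ⟨hB, hH, hD⟩ := sig_unique (pt_y _ _) (pt_y _ _) (hsgsin i _) (pt_y _ _) (pt_y _ _) (hsin j) hset
      exact absurd hB.symm (base_ne_zz θ _ _)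
    · obtain ⟨εj, σj, hεj, hσj, hBj, -, hRAj, hRCj, -, -, hiffj, hσdefj, -, -⟩ := roleV θ hθ hj.1 hj.2
      have hσjne : σj ≠ 0 := by rcases hσj with h|h <;> rw [h] <;> norm_num
      rw [hRAi, hRCi, hRAj, hRCj] at hset
      obtain ⟨hB, hH, hD⟩ := sig_unique (pt_y _ _) (pt_y _ _) (hsgsin i _) (pt_y _ _) (pt_y _ _) hσjne hset
      have := (pt_inj hD).1
      exact absurd (cos_eq_zero_pi2 (hθ i) this) hi.2.1
    · obtain ⟨hBj, -, hRAj, hRCj, -, -, -, -⟩ := roleZL θ hθ hj.1 hj.2.1 hj.2.2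
      rw [hRAi, hRCi, hRAj, hRCj] at hset
      obtain ⟨hB, hH, hD⟩ := sig_unique (pt_y _ _) (pt_y _ _) (hsgsin i _) (pt_y _ _) (pt_y _ _) (hsgsin j _) hset
      have hvv : θ i = θ j := cos_inj_Ioo (hθ i) (hθ j) (pt_inj hD).1
      have hXp := zz_eq_parts θ hB
      have hvale : val θ (eIdx θ i) = val θ (eIdx θ j) := by
        rw [val_eIdx θ i hi.1 hi.2.1, val_eIdx θ j hj.1 hj.2.1, hvv]
      have he := X_inj_run θ hθ (eIdx_lt θ i hi.1 hi.2.1) (eIdx_lt θ j hj.1 hj.2.1) hvale hXp.1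
      have hkey := eIdx_inj θ hi.1 hi.2.1 hj.1 hj.2.1 he
      have hk2 : rnk θ i / 2 = rnk θ j / 2 := congrArg Prod.snd hkey
      have h20 := hi.2.2
      have h21 := hj.2.2
      exact rnk_inj θ hvv (by omega)
    · obtain ⟨hBj, -, hRAj, hRCj, -, -, -, -⟩ := roleZR θ hθ hj.1 hj.2.1 hj.2.2
      rw [hRAi, hRCi, hRAj, hRCj] at hset
      obtain ⟨hB, hH, hD⟩ := sig_unique (pt_y _ _) (pt_y _ _) (hsgsin i _) (pt_y _ _) (pt_y _ _) (hnsgsin j _) hset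
      have := (pt_inj hH).1
      norm_num at this
  case _ => -- i : ZR
    obtain ⟨hBi, -, hRAi, hRCi, -, -, -, -⟩ := roleZR θ hθ hi.1 hi.2.1 hi.2.2
    rcases role_split θ j with hj|hj|hj|hj|hj|hj
    · obtain ⟨hBj, -, hRAj, hRCj, -, -, -, -⟩ := roleS1 θ hθ hj.1 hj.2
      rw [hRAi, hRCi, hRAj, hRCj] at hset
      obtain ⟨hB, hH, hD⟩ := sig_unique (pt_y _ _) (pt_y _ _) (hnsgsin i _) (pt_y _ _) (pt_y _ _) (hsin j) hset
      exact absurd hB.symm (base_ne_zz θ _ _)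
    · obtain ⟨hBj, -, hRAj, hRCj, -, -, -, -⟩ := roleS0 θ hθ hj.1 hj.2.1 hj.2.2
      rw [hRAi, hRCi, hRAj, hRCj] at hset
      obtain ⟨hB, hH, hD⟩ := sig_unique (pt_y _ _) (pt_y _ _) (hnsgsin i _) (pt_y _ _) (pt_y _ _) (hsin j) hset
      exact absurd hB.symm (base_ne_zz θ _ _)
    · obtain ⟨hBj, -, hRAj, hRCj, -, -, -, -⟩ := roleS2 θ hθ hj.1 hj.2.1 hj.2.2
      rw [hRAi, hRCi, hRAj, hRCj] at hset
      obtain ⟨hB, hH, hD⟩ := sig_unique (pt_y _ _) (pt_y _ _) (hnsgsin i _) (pt_y _ _) (pt_y _ _) (hsin j) hset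
      exact absurd hB.symm (base_ne_zz θ _ _)
    · obtain ⟨εj, σj, hεj, hσj, hBj, -, hRAj, hRCj, -, -, hiffj, hσdefj, -, -⟩ := roleV θ hθ hj.1 hj.2
      have hσjne : σj ≠ 0 := by rcases hσj with h|h <;> rw [h] <;> norm_num
      rw [hRAi, hRCi, hRAj, hRCj] at hset
      obtain ⟨hB, hH, hD⟩ := sig_unique (pt_y _ _) (pt_y _ _) (hnsgsin i _) (pt_y _ _) (pt_y _ _) hσjne hset
      have h0 := (pt_inj hD).1
      have : Real.cos (θ i) = 0 := by linarith [h0]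
      exact absurd (cos_eq_zero_pi2 (hθ i) this) hi.2.1
    · obtain ⟨hBj, -, hRAj, hRCj, -, -, -, -⟩ := roleZL θ hθ hj.1 hj.2.1 hj.2.2
      rw [hRAi, hRCi, hRAj, hRCj] at hset
      obtain ⟨hB, hH, hD⟩ := sig_unique (pt_y _ _) (pt_y _ _) (hnsgsin i _) (pt_y _ _) (pt_y _ _) (hsgsin j _) hset
      have := (pt_inj hH).1
      norm_num at this
    · obtain ⟨hBj, -, hRAj, hRCj, -, -, -, -⟩ := roleZR θ hθ hj.1 hj.2.1 hj.2.2
      rw [hRAi, hRCi, hRAj, hRCj] at hset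
      obtain ⟨hB, hH, hD⟩ := sig_unique (pt_y _ _) (pt_y _ _) (hnsgsin i _) (pt_y _ _) (pt_y _ _) (hnsgsin j _) hset
      have hvv : θ i = θ j := by
        have h0 := (pt_inj hD).1
        have : Real.cos (θ i) = Real.cos (θ j) := by linarith
        exact cos_inj_Ioo (hθ i) (hθ j) this
      have hXp := zz_eq_parts θ hB
      have hvale : val θ (eIdx θ i) = val θ (eIdx θ j) := by
        rw [val_eIdx θ i hi.1 hi.2.1, val_eIdx θ j hj.1 hj.2.1, hvv]
      have he := X_inj_run_succ θ hθ (eIdx_lt θ i hi.1 hi.2.1) (eIdx_lt θ j hj.1 hj.2.1) hvale hXp.1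
      have hkey := eIdx_inj θ hi.1 hi.2.1 hj.1 hj.2.1 he
      have hk2 : rnk θ i / 2 = rnk θ j / 2 := congrArg Prod.snd hkey
      have h20 := hi.2.2
      have h21 := hj.2.2
      exact rnk_inj θ hvv (by omega)
-- ===================== counting =====================

lemma card_AU_split : U1 θ + GG θ = (AU θ).card := by
  have h1 : U1 θ = ((AU θ).filter (fun u => u.1 ≠ π/2)).card := by
    rw [U1, ZU, Finset.card_image_of_injective _ (fun a b hab => by
      simpa using congrArg ofLex hab)]
  have h2 := Finset.card_filter_add_card_filter_not
    (s := AU θ) (p := fun u => u.1 = π/2)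
  simp only [ne_eq] at h1
  rw [GG, h1]
  omega

lemma SS_card : rr θ = (SS θ).card := by
  rw [rr, Svals]
  apply Finset.card_image_of_injOn
  intro a ha b hb hab
  simp only [SS, Finset.coe_filter, Set.mem_setOf_eq] at ha hb
  exact single_inj θ ha.2 hb.2 hab

lemma total_count : 2 * (U1 θ + GG θ) + rr θ = n := by
  rw [card_AU_split, ← NS_card, SS_card]
  have h2 := Finset.card_filter_add_card_filter_not
    (s := (Finset.univ : Finset (Fin n))) (p := IsSingle θ)
  rw [Finset.card_univ, Fintype.card_fin] at h2
  rw [NS, SS]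
  omega

lemma P0_card : (P0 θ).card ≤ U1 θ + GG θ + rr θ / 2 + 12 := by
  have hKK : KK θ ≤ U1 θ + GG θ + 1 := by
    rw [KK, NB]; omega
  calc (P0 θ).card ≤ (((Finset.range (KK θ + 1)).image (zz θ)) ∪
      {far θ 1 0, far θ 1 1, far θ (-1) 0, far θ (-1) 1} ∪
      ((Finset.range 4).image (basePt)) ∪
      ((Finset.range (rr θ / 2 + 1)).image (Rpt θ))).card + ({RoddPt θ} : Finset E2).card :=
        Finset.card_union_le _ _
    _ ≤ (((Finset.range (KK θ + 1)).image (zz θ)) ∪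
      {far θ 1 0, far θ 1 1, far θ (-1) 0, far θ (-1) 1} ∪
      ((Finset.range 4).image (basePt))).card
        + ((Finset.range (rr θ / 2 + 1)).image (Rpt θ)).card + 1 := by
        have := Finset.card_union_le ((((Finset.range (KK θ + 1)).image (zz θ)) ∪
          {far θ 1 0, far θ 1 1, far θ (-1) 0, far θ (-1) 1} ∪
          ((Finset.range 4).image (basePt)))) ((Finset.range (rr θ / 2 + 1)).image (Rpt θ))
        simp only [Finset.card_singleton]
        omega
    _ ≤ (((Finset.range (KK θ + 1)).image (zz θ)) ∪
      {far θ 1 0, far θ 1 1, far θ (-1) 0, far θ (-1) 1}).card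
        + ((Finset.range 4).image (basePt)).card
        + ((Finset.range (rr θ / 2 + 1)).image (Rpt θ)).card + 1 := by
        have := Finset.card_union_le (((Finset.range (KK θ + 1)).image (zz θ)) ∪
          {far θ 1 0, far θ 1 1, far θ (-1) 0, far θ (-1) 1}) ((Finset.range 4).image (basePt))
        omega
    _ ≤ ((Finset.range (KK θ + 1)).image (zz θ)).card
        + ({far θ 1 0, far θ 1 1, far θ (-1) 0, far θ (-1) 1} : Finset E2).card
        + ((Finset.range 4).image (basePt)).card
        + ((Finset.range (rr θ / 2 + 1)).image (Rpt θ)).card + 1 := by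
        have := Finset.card_union_le ((Finset.range (KK θ + 1)).image (zz θ))
          ({far θ 1 0, far θ 1 1, far θ (-1) 0, far θ (-1) 1} : Finset E2)
        omega
    _ ≤ (KK θ + 1) + 4 + 4 + (rr θ / 2 + 1) + 1 := by
        have h1 : ((Finset.range (KK θ + 1)).image (zz θ)).card ≤ KK θ + 1 :=
          le_trans (Finset.card_image_le) (by rw [Finset.card_range])
        have h2 : ({far θ 1 0, far θ 1 1, far θ (-1) 0, far θ (-1) 1} : Finset E2).card ≤ 4 := by
          apply le_trans (Finset.card_insert_le _ _)
          have := Finset.card_insert_le (far θ 1 1) ({far θ (-1) 0, far θ (-1) 1} : Finset E2)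
          have := Finset.card_insert_le (far θ (-1) 0) ({far θ (-1) 1} : Finset E2)
          simp only [Finset.card_singleton] at *
          omega
        have h3 : ((Finset.range 4).image (basePt)).card ≤ 4 :=
          le_trans (Finset.card_image_le) (by rw [Finset.card_range])
        have h4 : ((Finset.range (rr θ / 2 + 1)).image (Rpt θ)).card ≤ rr θ / 2 + 1 :=
          le_trans (Finset.card_image_le) (by rw [Finset.card_range])
        omega
    _ ≤ U1 θ + GG θ + rr θ / 2 + 12 := by omega

lemma jVT_le {i : Fin n} (hns : i ∈ NS θ) (hpi : θ i = π/2) :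
    jV θ i ≤ KK θ ∧ jT θ i ≤ KK θ := by
  have hk : rnk θ i / 2 < GG θ := by
    have := k_bound θ hns
    rw [hpi] at this
    rw [GG]
    exact this
  have hGNB : GG θ ≤ 2 * NB θ := by rw [NB]; omega
  constructor
  · rw [jV, KK]; omega
  · rw [jT, KK]; omega

lemma Rpt_idx_lt {i : Fin n} (hi : IsSingle θ i) : tIdx θ i / 2 < rr θ / 2 + 1 := by
  have := tIdx_lt θ hi
  omega
end Machinery



end
end St7


theorem statement7 (n m : ℕ) (hm : (n : ℝ) / 2 + 30 ≤ (m : ℝ))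
    (θ : Fin n → ℝ) (hθ : ∀ i, θ i ∈ Set.Ioo 0 Real.pi) :
    ∃ P : Finset (EuclideanSpace ℝ (Fin 2)), P.card = m ∧
      RealisesMult (P : Set (EuclideanSpace ℝ (Fin 2))) θ := by
  classical
  have hinf : Infinite St7.E2 := Infinite.of_injective (fun x : ℝ => St7.pt x 0)
    (fun a b hab => (St7.pt_inj hab).1)
  have hcount := St7.total_count θ
  have hcard := St7.P0_card θ
  have hnm : n + 60 ≤ 2 * m := by
    have h2 : (n:ℝ) + 60 ≤ 2*(m:ℝ) := by linarith
    exact_mod_cast h2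
  have hle : (St7.P0 θ).card ≤ m := by omega
  obtain ⟨P, hPsub, hPcard⟩ := Infinite.exists_superset_card_eq (St7.P0 θ) m hle
  have hmem : ∀ x, x ∈ St7.P0 θ → x ∈ (P : Set St7.E2) := fun x hx => hPsub hx
  have hU1KK : St7.U1 θ ≤ St7.KK θ := Nat.le_add_right _ _
  refine ⟨P, hPcard, St7.dataA θ, St7.dataB θ, St7.dataC θ, ?_, St7.main_inj θ hθ⟩
  intro i
  rcases St7.role_split θ i with hi|hi|hi|hi|hi|hi
  · obtain ⟨hB, hang, hRA, hRC, hne1, hne2, hA, hC⟩ := St7.roleS1 θ hθ hi.1 hi.2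
    refine ⟨?_, ?_, ?_, hne1, hne2, hang⟩
    · rw [hA]; exact hmem _ (St7.basePt_mem θ (by norm_num))
    · rw [hB]; exact hmem _ (St7.basePt_mem θ (by norm_num))
    · rw [hC]; exact hmem _ (St7.Rpt_mem θ (St7.Rpt_idx_lt θ hi.1))
  · obtain ⟨hB, hang, hRA, hRC, hne1, hne2, hA, hC⟩ := St7.roleS0 θ hθ hi.1 hi.2.1 hi.2.2
    refine ⟨?_, ?_, ?_, hne1, hne2, hang⟩
    · rw [hA]; exact hmem _ (St7.basePt_mem θ (by norm_num))
    · rw [hB]; exact hmem _ (St7.basePt_mem θ (by norm_num))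
    · rw [hC]; exact hmem _ (St7.Rpt_mem θ (St7.Rpt_idx_lt θ hi.1))
  · obtain ⟨hB, hang, hRA, hRC, hne1, hne2, hA, hC⟩ := St7.roleS2 θ hθ hi.1 hi.2.1 hi.2.2
    refine ⟨?_, ?_, ?_, hne1, hne2, hang⟩
    · rw [hA]; exact hmem _ (St7.basePt_mem θ (by norm_num))
    · rw [hB]; exact hmem _ (St7.basePt_mem θ (by norm_num))
    · rw [hC]; exact hmem _ (St7.RoddPt_mem θ)
  · obtain ⟨εi, σi, hεi, hσi, hB, hang, hRA, hRC, hne1, hne2, hiff, hσdef, hA, hC⟩ :=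
      St7.roleV θ hθ hi.1 hi.2
    obtain ⟨hjV, hjT⟩ := St7.jVT_le θ hi.1 hi.2
    refine ⟨?_, ?_, ?_, hne1, hne2, hang⟩
    · rw [hA]; exact hmem _ (St7.far_mem θ εi hεi _)
    · rw [hB]; exact hmem _ (St7.zz_mem θ hjV)
    · rw [hC]; exact hmem _ (St7.zz_mem θ hjT)
  · obtain ⟨hB, hang, hRA, hRC, hne1, hne2, hA, hC⟩ := St7.roleZL θ hθ hi.1 hi.2.1 hi.2.2
    have he := St7.eIdx_lt θ i hi.1 hi.2.1
    refine ⟨?_, ?_, ?_, hne1, hne2, hang⟩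
    · rw [hA]; exact hmem _ (St7.far_mem θ 1 (Or.inl rfl) _)
    · rw [hB]; exact hmem _ (St7.zz_mem θ (by omega))
    · rw [hC]; exact hmem _ (St7.zz_mem θ (by omega))
  · obtain ⟨hB, hang, hRA, hRC, hne1, hne2, hA, hC⟩ := St7.roleZR θ hθ hi.1 hi.2.1 hi.2.2
    have he := St7.eIdx_lt θ i hi.1 hi.2.1
    refine ⟨?_, ?_, ?_, hne1, hne2, hang⟩
    · rw [hA]; exact hmem _ (St7.far_mem θ (-1) (Or.inr rfl) _)
    · rw [hB]; exact hmem _ (St7.zz_mem θ (by omega))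
    · rw [hC]; exact hmem _ (St7.zz_mem θ (by omega))
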